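/- arXiv:1810.03448 — 3 statements merged into one kernel-verified Lean document; each statement's English description precedes it below -/
import Mathlib

section
/- Let m, n ∈ ℕ, let μ be a partition of m, ν a partition of n, and λ a partition of mn. If r ∈ ℕ is at least the greatest part of μ, then ⟨s_ν ∘ s_{(r) ⊔ μ}, s_{(nr) ⊔ λ}⟩ = ⟨s_ν ∘ s_μ, s_λ⟩. -/
open scoped Classical

namespace Pleth

/-- A finitely supported function `f : ℕ → ℕ` is a partition when its values are weakly
decreasing.  Parts are indexed from `0`, so `f i` is the `(i+1)`-st part `λ_{i+1}`;
parts beyond the length of the partition are `0`. -/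
def IsPartition (f : ℕ →₀ ℕ) : Prop := ∀ i j : ℕ, i ≤ j → f j ≤ f i

/-- `f` is a partition of `n`. -/
def IsPartitionOf (f : ℕ →₀ ℕ) (n : ℕ) : Prop := IsPartition f ∧ f.sum (fun _ k => k) = n

/-- The multiset of (nonzero) parts of `f`. -/
def partsOf (f : ℕ →₀ ℕ) : Multiset ℕ := f.support.val.map f

/-- The rectangular partition `(v^r)` with `r` parts equal to `v`. -/
noncomputable def rect (r v : ℕ) : ℕ →₀ ℕ := (Finset.range r).sum fun i => Finsupp.single i v

/-- The dominance order on compositions:  `Dominates α β` means `α ⊵ β`. -/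
def Dominates (α β : ℕ →₀ ℕ) : Prop :=
  ∀ k : ℕ, ∑ i ∈ Finset.range k, β i ≤ ∑ i ∈ Finset.range k, α i

/-- The Young diagram of a (finitely supported) shape, with rows and columns indexed
from `0`: the cell `(i, j)` lies in row `i` and column `j`. -/
def cells (lam : ℕ →₀ ℕ) : Finset (ℕ × ℕ) :=
  (lam.support ×ˢ Finset.range (lam.support.sup lam)).filter fun p => p.2 < lam p.1

lemma mem_cells {lam : ℕ →₀ ℕ} {p : ℕ × ℕ} : p ∈ cells lam ↔ p.2 < lam p.1 := by
  constructor
  · exact fun h => (Finset.mem_filter.mp h).2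
  · intro h
    exact Finset.mem_filter.mpr ⟨Finset.mem_product.mpr
      ⟨Finsupp.mem_support_iff.mpr (by omega),
       Finset.mem_range.mpr (lt_of_lt_of_le h (Finset.le_sup (Finsupp.mem_support_iff.mpr (by omega))))⟩, h⟩

/-- The type of cells of the Young diagram of `lam`. -/
abbrev Cell (lam : ℕ →₀ ℕ) : Type := {p : ℕ × ℕ // p ∈ cells lam}

/-- A `lam`-tableau with entries in `B` is a function from the Young diagram of `lam` to `B`. -/
abbrev Tab (lam : ℕ →₀ ℕ) (B : Type*) : Type _ := Cell lam → B

/-- The rows of `t` are weakly increasing with respect to the relation `le`. -/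
def RowsWeak (lam : ℕ →₀ ℕ) {B : Type*} (le : B → B → Prop) (t : Tab lam B) : Prop :=
  ∀ p q : Cell lam, p.1.1 = q.1.1 → p.1.2 ≤ q.1.2 → le (t p) (t q)

/-- The columns of `t` are strictly increasing with respect to the relation `lt`. -/
def ColsStrict (lam : ℕ →₀ ℕ) {B : Type*} (lt : B → B → Prop) (t : Tab lam B) : Prop :=
  ∀ p q : Cell lam, p.1.2 = q.1.2 → p.1.1 < q.1.1 → lt (t p) (t q)

/-- A semistandard tableau: rows weakly increasing, columns strictly increasing. -/
def IsSemistd (lam : ℕ →₀ ℕ) {B : Type*} [LinearOrder B] (t : Tab lam B) : Prop :=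
  RowsWeak lam (· ≤ ·) t ∧ ColsStrict lam (· < ·) t

/-- The semistandard `lam`-tableaux with entries in `B`. -/
abbrev SSYT (lam : ℕ →₀ ℕ) (B : Type*) [LinearOrder B] : Type _ :=
  {t : Tab lam B // IsSemistd lam t}

/-- The coefficient of the monomial `x^α = x_0^{α 0} x_1^{α 1} ⋯` in the Schur function
`s_lam`, namely the number of semistandard `lam`-tableaux with entries in `ℕ`
(the entry `b` corresponding to the variable `x_b`) having exactly `α b` entries
equal to `b` for every `b`. -/
noncomputable def schurCoeff (lam α : ℕ →₀ ℕ) : ℕ :=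
  Nat.card {t : Tab lam ℕ // IsSemistd lam t ∧
    ∀ b : ℕ, α b = (Finset.univ.filter (fun p : Cell lam => t p = b)).card}

/-- The set of entries of column `j` of the tableau `t`. -/
noncomputable def colSet (lam : ℕ →₀ ℕ) {B : Type*} [LinearOrder B] (t : Tab lam B) (j : ℕ) :
    Finset B :=
  (Finset.univ.filter (fun p : Cell lam => p.1.2 = j)).image t

/-- The total order on (column-standard) tableaux:  `t < u` if and only if, in the rightmost
column in which `t` and `u` differ, the greatest entry not appearing in both columns lies
in `u`. -/
def tabLT (lam : ℕ →₀ ℕ) {B : Type*} [LinearOrder B] (t u : Tab lam B) : Prop :=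
  ∃ j : ℕ, colSet lam t j ≠ colSet lam u j ∧
    (∀ j' : ℕ, j < j' → colSet lam t j' = colSet lam u j') ∧
    ∃ m : B, m ∈ colSet lam u j ∧ m ∉ colSet lam t j ∧
      ∀ x : B, ((x ∈ colSet lam t j ∧ x ∉ colSet lam u j) ∨
                (x ∈ colSet lam u j ∧ x ∉ colSet lam t j)) → x ≤ m

def tabLE (lam : ℕ →₀ ℕ) {B : Type*} [LinearOrder B] (t u : Tab lam B) : Prop :=
  t = u ∨ tabLT lam t u

/-- A plethystic semistandard tableau of shape `mu^nu`: a `nu`-tableau whose entries are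
semistandard `mu`-tableaux, with rows weakly increasing and columns strictly increasing
with respect to the total order `tabLT` on semistandard `mu`-tableaux. -/
def IsPSSYT (mu nu : ℕ →₀ ℕ) {B : Type*} [LinearOrder B] (T : Tab nu (SSYT mu B)) : Prop :=
  RowsWeak nu (fun s s' => tabLE mu s.1 s'.1) T ∧
  ColsStrict nu (fun s s' => tabLT mu s.1 s'.1) T

/-- `T` has weight `α`: for every letter `b`, the total number of entries equal to `b`
among the `mu`-tableau entries of `T` is `α b`. -/
def HasWeight (mu nu : ℕ →₀ ℕ) {B : Type*} [LinearOrder B] (T : Tab nu (SSYT mu B))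
    (α : B → ℕ) : Prop :=
  ∀ b : B, α b = ∑ P : Cell nu,
    (Finset.univ.filter (fun p : Cell mu => (T P).1 p = b)).card

/-- The coefficient of the monomial `x^α` in the plethysm `s_nu ∘ s_mu`, namely the number
of plethystic semistandard tableaux of shape `mu^nu` and weight `α`. -/
noncomputable def plethCoeff (nu mu α : ℕ →₀ ℕ) : ℕ :=
  Nat.card {T : Tab nu (SSYT mu ℕ) // IsPSSYT mu nu T ∧ HasWeight mu nu T (fun b => α b)}

end Pleth

namespace Pleth

section Batch1
open Finsupp

/-- prepend a part `v` to `f`. -/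
noncomputable def shiftW (v : ℕ) (f : ℕ →₀ ℕ) : ℕ →₀ ℕ :=
  Finsupp.single 0 v + f.embDomain ⟨Nat.succ, Nat.succ_injective⟩

@[simp] lemma shiftW_zero (v : ℕ) (f : ℕ →₀ ℕ) : shiftW v f 0 = v := by
  have h0 : (0 : ℕ) ∉ Set.range (⟨Nat.succ, Nat.succ_injective⟩ : ℕ ↪ ℕ) := by
    simp [Function.Embedding.coeFn_mk]
  simp [shiftW, Finsupp.add_apply, Finsupp.embDomain_notin_range _ _ _ h0]

@[simp] lemma shiftW_succ (v : ℕ) (f : ℕ →₀ ℕ) (i : ℕ) : shiftW v f (i + 1) = f i := by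
  have h2 : (f.embDomain ⟨Nat.succ, Nat.succ_injective⟩) (i + 1) = f i :=
    Finsupp.embDomain_apply_self (⟨Nat.succ, Nat.succ_injective⟩ : ℕ ↪ ℕ) f i
  rw [shiftW, Finsupp.add_apply, h2, Finsupp.single_apply]
  simp

/-- drop the first part of `f`. -/
noncomputable def down (f : ℕ →₀ ℕ) : ℕ →₀ ℕ :=
  Finsupp.comapDomain Nat.succ f (Nat.succ_injective.injOn)

@[simp] lemma down_apply (f : ℕ →₀ ℕ) (i : ℕ) : down f i = f (i + 1) := rfl

@[simp] lemma down_shiftW (v : ℕ) (f : ℕ →₀ ℕ) : down (shiftW v f) = f := by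
  ext i; simp

lemma shiftW_down {f : ℕ →₀ ℕ} {v : ℕ} (h : f 0 = v) : shiftW v (down f) = f := by
  ext i; cases i with
  | zero => simpa using h.symm
  | succ i => simp

lemma sum_shiftW (v : ℕ) (f : ℕ →₀ ℕ) :
    (shiftW v f).sum (fun _ k => k) = v + f.sum (fun _ k => k) := by
  rw [shiftW, Finsupp.sum_add_index' (by simp) (by intros; rfl)]
  congr 1
  · exact Finsupp.sum_single_index rfl
  · exact Finsupp.sum_embDomain (v := f)

lemma isPartition_shiftW {f : ℕ →₀ ℕ} (hf : IsPartition f) {v : ℕ} (h : f 0 ≤ v) :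
    IsPartition (shiftW v f) := by
  intro i j hij
  cases j with
  | zero =>
    obtain rfl : i = 0 := Nat.le_zero.mp hij
    exact le_rfl
  | succ j =>
    cases i with
    | zero => simpa using le_trans (hf 0 j (Nat.zero_le _)) h
    | succ i => simpa using hf i j (by omega)

lemma isPartition_down {f : ℕ →₀ ℕ} (hf : IsPartition f) : IsPartition (down f) := by
  intro i j hij; simpa using hf (i+1) (j+1) (by omega)

lemma not_isPartition_shiftW {f : ℕ →₀ ℕ} {v : ℕ} (h : v < f 0) :
    ¬ IsPartition (shiftW v f) := by
  intro hP
  have h0 := hP 0 1 (by omega)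
  have h1 : shiftW v f 1 = f 0 := shiftW_succ v f 0
  rw [shiftW_zero, h1] at h0
  omega

lemma IsPartition.le_zero {f : ℕ →₀ ℕ} (hf : IsPartition f) (i : ℕ) : f i ≤ f 0 :=
  hf 0 i (Nat.zero_le _)

lemma sum_eq_range_sum {f : ℕ →₀ ℕ} {M : ℕ} (h : ∀ i, f i ≠ 0 → i < M) :
    f.sum (fun _ k => k) = ∑ i ∈ Finset.range M, f i := by
  rw [Finsupp.sum]
  refine Finset.sum_subset ?_ ?_
  · intro i hi
    exact Finset.mem_range.mpr (h i (Finsupp.mem_support_iff.mp hi))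
  · intro i _ hi
    exact Finsupp.notMem_support_iff.mp hi

lemma range_sum_le (f : ℕ →₀ ℕ) (k : ℕ) :
    ∑ j ∈ Finset.range k, f j ≤ f.sum (fun _ x => x) := by
  rw [Finsupp.sum, ← Finset.sum_filter_ne_zero (Finset.range k)]
  apply Finset.sum_le_sum_of_subset
  intro x hx
  simp only [Finset.mem_filter] at hx
  exact Finsupp.mem_support_iff.mpr hx.2

lemma IsPartitionOf.lt_of_ne_zero {f : ℕ →₀ ℕ} {N : ℕ} (hf : IsPartitionOf f N)
    {i : ℕ} (h : f i ≠ 0) : i < N := by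
  by_contra hc
  push_neg at hc
  have h1 : ∀ j ∈ Finset.range (i+1), 1 ≤ f j := by
    intro j hj
    have hj2 := Finset.mem_range.mp hj
    have := hf.1 j i (by omega)
    omega
  have h2 : (i+1 : ℕ) ≤ ∑ j ∈ Finset.range (i+1), f j := by
    calc (i+1 : ℕ) = ∑ _j ∈ Finset.range (i+1), 1 := by simp
    _ ≤ _ := Finset.sum_le_sum h1
  have h3 : ∑ j ∈ Finset.range (i+1), f j ≤ f.sum (fun _ k => k) := range_sum_le f (i+1)
  rw [hf.2] at h3
  omega

end Batch1

section Batch2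

variable {lam : ℕ →₀ ℕ}

/-- number of cells in row `i` is `lam i`. -/
lemma card_row (lam : ℕ →₀ ℕ) (i : ℕ) :
    (Finset.univ.filter (fun p : Cell lam => p.1.1 = i)).card = lam i := by
  rw [← Finset.card_range (lam i)]
  refine Finset.card_bij (fun (p : Cell lam) _ => p.1.2) ?_ ?_ ?_
  · intro p hp
    simp only [Finset.mem_filter, Finset.mem_univ, true_and] at hp
    have h2 := mem_cells.mp p.2
    rw [hp] at h2
    exact Finset.mem_range.mpr h2
  · intro p1 h1 p2 h2 h
    simp only [Finset.mem_filter, Finset.mem_univ, true_and] at h1 h2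
    apply Subtype.ext
    exact Prod.ext (h1.trans h2.symm) h
  · intro b hb
    refine ⟨⟨(i, b), mem_cells.mpr (Finset.mem_range.mp hb)⟩, ?_, rfl⟩
    simp

lemma card_rows_lt (lam : ℕ →₀ ℕ) (k : ℕ) :
    (Finset.univ.filter (fun p : Cell lam => p.1.1 < k)).card =
      ∑ i ∈ Finset.range k, lam i := by
  rw [Finset.card_eq_sum_card_fiberwise (f := fun p : Cell lam => p.1.1)
    (t := Finset.range k) (fun p hp => Finset.mem_range.mpr
      ((Finset.mem_filter.mp hp).2))]
  apply Finset.sum_congr rfl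
  intro i hi
  rw [← card_row lam i]
  congr 1
  ext p
  simp only [Finset.mem_filter, Finset.mem_univ, true_and]
  constructor
  · exact fun h => h.2
  · intro h; exact ⟨h ▸ Finset.mem_range.mp hi, h⟩

lemma card_entry_lt {B : Type*} [LinearOrder B] (t : Tab lam ℕ) (k : ℕ) :
    (Finset.univ.filter (fun p : Cell lam => t p < k)).card =
      ∑ b ∈ Finset.range k, (Finset.univ.filter (fun p : Cell lam => t p = b)).card := by
  rw [Finset.card_eq_sum_card_fiberwise (f := fun p : Cell lam => t p)
    (t := Finset.range k) (fun p hp => Finset.mem_range.mpr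
      ((Finset.mem_filter.mp hp).2))]
  apply Finset.sum_congr rfl
  intro b hb
  congr 1
  ext p
  simp only [Finset.mem_filter, Finset.mem_univ, true_and]
  constructor
  · exact fun h => h.2
  · intro h; exact ⟨h ▸ Finset.mem_range.mp hb, h⟩

/-- in a semistandard tableau each entry is at least its row index. -/
lemma row_le_entry (hlam : IsPartition lam) {t : Tab lam ℕ} (ht : IsSemistd lam t) :
    ∀ p : Cell lam, p.1.1 ≤ t p := by
  suffices h : ∀ i, ∀ p : Cell lam, p.1.1 = i → i ≤ t p by
    exact fun p => h p.1.1 p rfl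
  intro i
  induction i with
  | zero => exact fun p _ => Nat.zero_le _
  | succ i ih =>
    intro p hp
    have hmem : ((i, p.1.2) : ℕ × ℕ) ∈ cells lam := by
      apply mem_cells.mpr
      have h1 := mem_cells.mp p.2
      have h2 : lam p.1.1 ≤ lam i := hp ▸ hlam i (i+1) (by omega)
      exact lt_of_lt_of_le h1 h2
    have hcol := ht.2 ⟨(i, p.1.2), hmem⟩ p rfl (by show i < p.1.1; omega)
    have := ih ⟨(i, p.1.2), hmem⟩ rfl
    omega

lemma card_cells (lam : ℕ →₀ ℕ) :
    (Finset.univ : Finset (Cell lam)).card = lam.sum (fun _ k => k) := by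
  rw [Finset.card_eq_sum_card_fiberwise (f := fun p : Cell lam => p.1.1)
    (t := lam.support) (fun p _ => Finsupp.mem_support_iff.mpr (by
      have h := mem_cells.mp p.2
      exact Nat.pos_iff_ne_zero.mp (lt_of_le_of_lt (Nat.zero_le _) h)))]
  rw [Finsupp.sum]
  apply Finset.sum_congr rfl
  intro i _
  exact card_row lam i

/-- L2: dominance. -/
lemma dominates_of_schurCoeff_ne_zero {kap al : ℕ →₀ ℕ} (hk : IsPartition kap)
    (h : schurCoeff kap al ≠ 0) : Dominates kap al := by
  have hne : Nonempty {t : Tab kap ℕ // IsSemistd kap t ∧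
      ∀ b : ℕ, al b = (Finset.univ.filter (fun p : Cell kap => t p = b)).card} := by
    by_contra hc
    exact h (Nat.card_eq_zero.mpr (Or.inl (not_nonempty_iff.mp hc)))
  obtain ⟨t, ht, hw⟩ := hne.some
  intro k
  have e1 : ∑ i ∈ Finset.range k, al i =
      (Finset.univ.filter (fun p : Cell kap => t p < k)).card := by
    rw [card_entry_lt (B := ℕ) t k]
    exact Finset.sum_congr rfl (fun b _ => hw b)
  rw [e1, ← card_rows_lt]
  apply Finset.card_le_card
  intro p hp
  simp only [Finset.mem_filter, Finset.mem_univ, true_and] at hp ⊢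
  exact lt_of_le_of_lt (row_le_entry hk ht p) hp

/-- L4-type: number of zero entries is at most the first row. -/
lemma zeros_le_row0 (hlam : IsPartition lam) {t : Tab lam ℕ} (ht : IsSemistd lam t) :
    (Finset.univ.filter (fun p : Cell lam => t p = 0)).card ≤ lam 0 := by
  rw [← card_row lam 0]
  apply Finset.card_le_card
  intro p hp
  simp only [Finset.mem_filter, Finset.mem_univ, true_and] at hp ⊢
  have := row_le_entry hlam ht p
  omega

end Batch2

section Batch3

/-- all entries of `t` equal the row index, when the weight is the shape. -/
lemma weight_row_eq {kap : ℕ →₀ ℕ} (hk : IsPartition kap) {t : Tab kap ℕ}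
    (ht : IsSemistd kap t)
    (hw : ∀ b : ℕ, kap b = (Finset.univ.filter (fun p : Cell kap => t p = b)).card)
    (p : Cell kap) : t p = p.1.1 := by
  have key : ∀ k, Finset.univ.filter (fun p : Cell kap => t p < k) =
      Finset.univ.filter (fun p : Cell kap => p.1.1 < k) := by
    intro k
    apply Finset.eq_of_subset_of_card_le
    · intro q hq
      simp only [Finset.mem_filter, Finset.mem_univ, true_and] at hq ⊢
      exact lt_of_le_of_lt (row_le_entry hk ht q) hq
    · rw [card_rows_lt, card_entry_lt (B := ℕ) t k]
      exact le_of_eq (Finset.sum_congr rfl (fun b _ => hw b))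
  have h1 := row_le_entry hk ht p
  have h2 : p ∈ Finset.univ.filter (fun q : Cell kap => q.1.1 < p.1.1 + 1) := by
    simp
  rw [← key] at h2
  simp only [Finset.mem_filter, Finset.mem_univ, true_and] at h2
  omega

/-- `K(κ,κ) = 1`. -/
lemma schurCoeff_diag {kap : ℕ →₀ ℕ} (hk : IsPartition kap) : schurCoeff kap kap = 1 := by
  rw [schurCoeff, Nat.card_eq_one_iff_unique]
  constructor
  · constructor
    rintro ⟨t, ht, hw⟩ ⟨t', ht', hw'⟩
    apply Subtype.ext
    funext p
    show t p = t' p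
    rw [weight_row_eq hk ht hw p, weight_row_eq hk ht' hw' p]
  · refine ⟨⟨fun p => p.1.1, ⟨?_, ?_⟩, fun b => (card_row kap b).symm⟩⟩
    · intro p q hrow _
      exact le_of_eq hrow
    · intro p q _ hlt
      exact hlt

variable {μ : ℕ →₀ ℕ} {v : ℕ}

def upCell (μ : ℕ →₀ ℕ) (v : ℕ) (q : Cell μ) : Cell (shiftW v μ) :=
  ⟨(q.1.1 + 1, q.1.2), mem_cells.mpr (by rw [shiftW_succ]; exact mem_cells.mp q.2)⟩

@[simp] lemma upCell_fst (q : Cell μ) : (upCell μ v q).1.1 = q.1.1 + 1 := rfl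
@[simp] lemma upCell_snd (q : Cell μ) : (upCell μ v q).1.2 = q.1.2 := rfl

def downCell (p : Cell (shiftW v μ)) (h : p.1.1 ≠ 0) : Cell μ :=
  ⟨(p.1.1 - 1, p.1.2), mem_cells.mpr (by
    have h2 := mem_cells.mp p.2
    rw [show p.1.1 = (p.1.1 - 1) + 1 from (Nat.succ_pred_eq_of_pos
      (Nat.pos_of_ne_zero h)).symm, shiftW_succ] at h2
    exact h2)⟩

@[simp] lemma downCell_fst (p : Cell (shiftW v μ)) (h : p.1.1 ≠ 0) :
    (downCell p h).1.1 = p.1.1 - 1 := rfl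
@[simp] lemma downCell_snd (p : Cell (shiftW v μ)) (h : p.1.1 ≠ 0) :
    (downCell p h).1.2 = p.1.2 := rfl

lemma up_downCell (p : Cell (shiftW v μ)) (h : p.1.1 ≠ 0) :
    upCell μ v (downCell p h) = p := by
  apply Subtype.ext
  apply Prod.ext
  · show p.1.1 - 1 + 1 = p.1.1
    omega
  · rfl

lemma down_upCell (q : Cell μ) (h : (upCell μ v q).1.1 ≠ 0) :
    downCell (upCell μ v q) h = q := by
  apply Subtype.ext
  apply Prod.ext
  · show q.1.1 + 1 - 1 = q.1.1
    omega
  · rfl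

noncomputable def DD (t : Tab (shiftW v μ) ℕ) : Tab μ ℕ :=
  fun q => t (upCell μ v q) - 1

noncomputable def UU (s : Tab μ ℕ) : Tab (shiftW v μ) ℕ := fun p =>
  if h : p.1.1 = 0 then 0 else s (downCell p h) + 1

def ZeroRow {lam : ℕ →₀ ℕ} (t : Tab lam ℕ) : Prop :=
  ∀ p : Cell lam, p.1.1 = 0 → t p = 0

lemma one_le_up (hμ : IsPartition μ) (hv : μ 0 ≤ v) {t : Tab (shiftW v μ) ℕ}
    (ht : IsSemistd (shiftW v μ) t) (q : Cell μ) : 1 ≤ t (upCell μ v q) := by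
  have h := row_le_entry (isPartition_shiftW hμ hv) ht (upCell μ v q)
  have h2 : (upCell μ v q).1.1 = q.1.1 + 1 := rfl
  omega

lemma DD_semistd (hμ : IsPartition μ) (hv : μ 0 ≤ v) {t : Tab (shiftW v μ) ℕ}
    (ht : IsSemistd (shiftW v μ) t) : IsSemistd μ (DD t) := by
  constructor
  · intro p q hrow hcol
    have h1 := ht.1 (upCell μ v p) (upCell μ v q) (by simp [hrow]) hcol
    have h2 := one_le_up hμ hv ht p
    simp only [DD]
    omega
  · intro p q hcol hlt
    have h1 := ht.2 (upCell μ v p) (upCell μ v q) hcol (by simp; omega)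
    have h2 := one_le_up hμ hv ht p
    simp only [DD]
    omega

lemma UU_semistd {s : Tab μ ℕ} (hs : IsSemistd μ s) :
    IsSemistd (shiftW v μ) (UU s) := by
  constructor
  · intro p q hrow hcol
    by_cases h : p.1.1 = 0
    · have h' : q.1.1 = 0 := hrow ▸ h
      simp only [UU, dif_pos h, dif_pos h']
      exact le_rfl
    · have h' : q.1.1 ≠ 0 := hrow ▸ h
      simp only [UU, dif_neg h, dif_neg h']
      have := hs.1 (downCell p h) (downCell q h') (by simp; omega) (by simpa using hcol)
      omega
  · intro p q hcol hlt
    have h' : q.1.1 ≠ 0 := by omega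
    by_cases h : p.1.1 = 0
    · simp only [UU, dif_pos h, dif_neg h']
      omega
    · simp only [UU, dif_neg h, dif_neg h']
      have := hs.2 (downCell p h) (downCell q h') (by simpa using hcol) (by simp; omega)
      omega

lemma UU_DD (hμ : IsPartition μ) (hv : μ 0 ≤ v) {t : Tab (shiftW v μ) ℕ}
    (ht : IsSemistd (shiftW v μ) t) (hz : ZeroRow t) : UU (DD t) = t := by
  funext p
  by_cases h : p.1.1 = 0
  · simp only [UU, dif_pos h]
    exact (hz p h).symm
  · simp only [UU, dif_neg h, DD]
    rw [up_downCell p h]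
    have := row_le_entry (isPartition_shiftW hμ hv) ht p
    omega

lemma DD_UU (s : Tab μ ℕ) : DD (UU s : Tab (shiftW v μ) ℕ) = s := by
  funext q
  have h : (upCell μ v q).1.1 ≠ 0 := by simp
  simp only [DD, UU, dif_neg h]
  rw [down_upCell q h]
  omega

lemma zeroRow_UU (s : Tab μ ℕ) : ZeroRow (UU s : Tab (shiftW v μ) ℕ) :=
  fun p hp => by simp only [UU, dif_pos hp]

lemma fiber_card (hμ : IsPartition μ) (hv : μ 0 ≤ v) {t : Tab (shiftW v μ) ℕ}
    (ht : IsSemistd (shiftW v μ) t) (hz : ZeroRow t) (b : ℕ) :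
    (Finset.univ.filter (fun q : Cell μ => DD t q = b)).card =
    (Finset.univ.filter (fun p : Cell (shiftW v μ) => t p = b + 1)).card := by
  refine Finset.card_bij (fun q _ => upCell μ v q) ?_ ?_ ?_
  · intro q hq
    simp only [Finset.mem_filter, Finset.mem_univ, true_and] at hq ⊢
    simp only [DD] at hq ⊢
    have := one_le_up hμ hv ht q
    omega
  · intro q1 hq1 q2 hq2 h
    have e1 : (upCell μ v q1).1 = (upCell μ v q2).1 := congrArg Subtype.val h
    have e2 := congrArg Prod.fst e1
    have e3 := congrArg Prod.snd e1
    simp only [upCell_fst, upCell_snd] at e2 e3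
    exact Subtype.ext (Prod.ext (by omega) e3)
  · intro p hp
    simp only [Finset.mem_filter, Finset.mem_univ, true_and] at hp
    have hne : p.1.1 ≠ 0 := by
      intro h0
      rw [hz p h0] at hp
      omega
    refine ⟨downCell p hne, ?_, up_downCell p hne⟩
    simp only [Finset.mem_filter, Finset.mem_univ, true_and]
    simp only [DD]
    rw [up_downCell p hne, hp]
    omega

lemma zeros_card (hμ : IsPartition μ) (hv : μ 0 ≤ v) {t : Tab (shiftW v μ) ℕ}
    (ht : IsSemistd (shiftW v μ) t) (hz : ZeroRow t) :
    (Finset.univ.filter (fun p : Cell (shiftW v μ) => t p = 0)).card = v := by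
  have heq : Finset.univ.filter (fun p : Cell (shiftW v μ) => t p = 0) =
      Finset.univ.filter (fun p : Cell (shiftW v μ) => p.1.1 = 0) := by
    ext p
    simp only [Finset.mem_filter, Finset.mem_univ, true_and]
    constructor
    · intro h
      have := row_le_entry (isPartition_shiftW hμ hv) ht p
      omega
    · exact hz p
  rw [heq, card_row (shiftW v μ) 0, shiftW_zero]

lemma zeroRow_of_card (hμ : IsPartition μ) (hv : μ 0 ≤ v) {t : Tab (shiftW v μ) ℕ}
    (ht : IsSemistd (shiftW v μ) t)
    (hcard : (Finset.univ.filter (fun p : Cell (shiftW v μ) => t p = 0)).card = v) :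
    ZeroRow t := by
  have hsub : Finset.univ.filter (fun p : Cell (shiftW v μ) => t p = 0) ⊆
      Finset.univ.filter (fun p : Cell (shiftW v μ) => p.1.1 = 0) := by
    intro p hp
    simp only [Finset.mem_filter, Finset.mem_univ, true_and] at hp ⊢
    have := row_le_entry (isPartition_shiftW hμ hv) ht p
    omega
  have heq := Finset.eq_of_subset_of_card_le hsub (by
    rw [card_row (shiftW v μ) 0, shiftW_zero, hcard])
  intro p hp
  have hmem : p ∈ Finset.univ.filter (fun p : Cell (shiftW v μ) => p.1.1 = 0) := by
    simp only [Finset.mem_filter, Finset.mem_univ, true_and]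
    exact hp
  rw [← heq] at hmem
  simp only [Finset.mem_filter, Finset.mem_univ, true_and] at hmem
  exact hmem

/-- L5: row-deletion for Kostka numbers. -/
lemma schurCoeff_shiftW (hμ : IsPartition μ) (hv : μ 0 ≤ v)
    (β : ℕ →₀ ℕ) (hβ : β 0 = v) :
    schurCoeff (shiftW v μ) β = schurCoeff μ (down β) := by
  apply Nat.card_congr
  refine ⟨fun x => ⟨DD x.1, DD_semistd hμ hv x.2.1, ?_⟩,
          fun y => ⟨UU y.1, UU_semistd y.2.1, ?_⟩, ?_, ?_⟩
  · obtain ⟨t, ht, hw⟩ := x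
    have hz : ZeroRow t := zeroRow_of_card hμ hv ht (by rw [← hw 0, hβ])
    intro b
    show (down β) b = (Finset.univ.filter (fun q : Cell μ => DD t q = b)).card
    rw [down_apply, hw (b+1), fiber_card hμ hv ht hz b]
  · obtain ⟨s, hs, hw⟩ := y
    intro b
    show β b = (Finset.univ.filter
      (fun p : Cell (shiftW v μ) => (UU s : Tab (shiftW v μ) ℕ) p = b)).card
    cases b with
    | zero =>
      rw [hβ, zeros_card hμ hv (UU_semistd hs) (zeroRow_UU s)]
    | succ b =>
      have hfib := fiber_card hμ hv (UU_semistd hs) (zeroRow_UU (v := v) s) b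
      rw [DD_UU] at hfib
      rw [← hfib, ← down_apply β b]
      exact hw b
  · intro x
    obtain ⟨t, ht, hw⟩ := x
    apply Subtype.ext
    show UU (DD t) = t
    exact UU_DD hμ hv ht (zeroRow_of_card hμ hv ht (by rw [← hw 0, hβ]))
  · intro y
    apply Subtype.ext
    show DD (UU y.1) = y.1
    exact DD_UU y.1

end Batch3

section Batch4

variable {f g : ℕ →₀ ℕ}

lemma countP_parts (f : ℕ →₀ ℕ) (k : ℕ) :
    (partsOf f).countP (fun x => decide (k ≤ x)) =
      (f.support.filter (fun j => k ≤ f j)).card := by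
  rw [partsOf, Multiset.countP_map, Finset.card_def, Finset.filter_val]
  congr 1
  apply Multiset.filter_congr
  intro x _
  simp

lemma part_ge_iff (hf : IsPartition f) (i k : ℕ) (hk : 1 ≤ k) :
    k ≤ f i ↔ i < (f.support.filter (fun j => k ≤ f j)).card := by
  set S := f.support.filter (fun j => k ≤ f j) with hS
  have hdown : ∀ j ∈ S, ∀ j' ≤ j, j' ∈ S := by
    intro j hj j' hj'
    simp only [hS, Finset.mem_filter, Finsupp.mem_support_iff] at hj ⊢
    have := hf j' j hj'
    constructor <;> omega
  constructor
  · intro h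
    have hsub : Finset.range (i+1) ⊆ S := by
      intro j hj
      exact hdown i (by
        simp only [hS, Finset.mem_filter, Finsupp.mem_support_iff]
        constructor <;> omega) j (by
          have := Finset.mem_range.mp hj; omega)
    have := Finset.card_le_card hsub
    rw [Finset.card_range] at this
    omega
  · intro h
    by_contra hc
    push_neg at hc
    have hsub : S ⊆ Finset.range i := by
      intro j hj
      rw [Finset.mem_range]
      by_contra hc2
      push_neg at hc2
      have hji := hdown j hj i hc2
      simp only [hS, Finset.mem_filter, Finsupp.mem_support_iff] at hji
      omega
    have := Finset.card_le_card hsub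
    rw [Finset.card_range] at this
    omega

lemma parts_inj (hf : IsPartition f) (hg : IsPartition g)
    (h : partsOf f = partsOf g) : f = g := by
  have hcard : ∀ k, (f.support.filter (fun j => k ≤ f j)).card =
      (g.support.filter (fun j => k ≤ g j)).card := by
    intro k
    rw [← countP_parts, ← countP_parts, h]
  ext i
  apply Nat.le_antisymm
  · rcases Nat.eq_zero_or_pos (f i) with h0 | h0
    · omega
    · have := (part_ge_iff hf i (f i) h0).mp le_rfl
      rw [hcard (f i)] at this
      exact (part_ge_iff hg i (f i) h0).mpr this
  · rcases Nat.eq_zero_or_pos (g i) with h0 | h0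
    · omega
    · have := (part_ge_iff hg i (g i) h0).mp le_rfl
      rw [← hcard (g i)] at this
      exact (part_ge_iff hf i (g i) h0).mpr this

lemma support_shiftW (hv : 0 < v) :
    (shiftW v g).support = insert 0 (g.support.map ⟨Nat.succ, Nat.succ_injective⟩) := by
  ext i
  cases i with
  | zero =>
    simp only [Finsupp.mem_support_iff, shiftW_zero]
    constructor
    · intro _; exact Finset.mem_insert_self 0 _
    · intro _; omega
  | succ i =>
    simp only [Finsupp.mem_support_iff, shiftW_succ, Finset.mem_insert, Finset.mem_map,
      Function.Embedding.coeFn_mk]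
    constructor
    · intro h
      exact Or.inr ⟨i, h, rfl⟩
    · rintro (h | ⟨j, hj, hji⟩)
      · omega
      · have : j = i := by omega
        subst this
        exact hj

lemma partsOf_shiftW {v : ℕ} (hv : 0 < v) (g : ℕ →₀ ℕ) :
    partsOf (shiftW v g) = v ::ₘ partsOf g := by
  rw [partsOf, support_shiftW hv]
  rw [Finset.insert_val_of_notMem (by
    simp only [Finset.mem_map, Function.Embedding.coeFn_mk]
    rintro ⟨j, _, hj⟩
    omega)]
  rw [Multiset.map_cons, shiftW_zero, Finset.map_val, Multiset.map_map]
  congr 1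
  rw [partsOf]
  apply Multiset.map_congr rfl
  intro x _
  simp [Function.comp, shiftW_succ]

lemma sum_partsOf (f : ℕ →₀ ℕ) : (partsOf f).sum = f.sum (fun _ k => k) := rfl

lemma le_head_of_mem_partsOf (hf : IsPartition f) {x : ℕ} (h : x ∈ partsOf f) :
    x ≤ f 0 := by
  rw [partsOf, Multiset.mem_map] at h
  obtain ⟨i, _, hi⟩ := h
  exact hi ▸ hf.le_zero i

end Batch4

section Batch5

variable {μ : ℕ →₀ ℕ} {v : ℕ}

lemma mem_colSet {lam : ℕ →₀ ℕ} {B : Type*} [LinearOrder B] {t : Tab lam B} {j : ℕ} {a : B} :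
    a ∈ colSet lam t j ↔ ∃ p : Cell lam, p.1.2 = j ∧ t p = a := by
  simp only [colSet, Finset.mem_image, Finset.mem_filter, Finset.mem_univ, true_and]

lemma colSet_lt_head {lam : ℕ →₀ ℕ} (hlam : IsPartition lam) {B : Type*} [LinearOrder B]
    {s : Tab lam B} {j : ℕ} {a : B} (h : a ∈ colSet lam s j) : j < lam 0 := by
  obtain ⟨p, hpj, _⟩ := mem_colSet.mp h
  have h1 := mem_cells.mp p.2
  have h2 := hlam.le_zero p.1.1
  omega

lemma zero_mem_colSet (hμ : IsPartition μ) (hv : μ 0 ≤ v) {t : Tab (shiftW v μ) ℕ}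
    (hz : ZeroRow t) {j : ℕ} (hj : j < v) : (0 : ℕ) ∈ colSet (shiftW v μ) t j := by
  refine mem_colSet.mpr ⟨⟨(0, j), mem_cells.mpr (by simpa using hj)⟩, rfl, ?_⟩
  exact hz _ rfl

lemma succ_mem_colSet_iff (hμ : IsPartition μ) (hv : μ 0 ≤ v) {t : Tab (shiftW v μ) ℕ}
    (ht : IsSemistd (shiftW v μ) t) (hz : ZeroRow t) (b j : ℕ) :
    (b + 1) ∈ colSet (shiftW v μ) t j ↔ b ∈ colSet μ (DD t) j := by
  rw [mem_colSet, mem_colSet]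
  constructor
  · rintro ⟨p, hpj, hpa⟩
    have hne : p.1.1 ≠ 0 := by
      intro h0
      rw [hz p h0] at hpa
      omega
    refine ⟨downCell p hne, hpj, ?_⟩
    simp only [DD]
    rw [up_downCell p hne]
    omega
  · rintro ⟨q, hqj, hqa⟩
    refine ⟨upCell μ v q, hqj, ?_⟩
    have h1 := one_le_up hμ hv ht q
    simp only [DD] at hqa
    omega

lemma colSet_eq_iff (hμ : IsPartition μ) (hv : μ 0 ≤ v) {t u : Tab (shiftW v μ) ℕ}
    (ht : IsSemistd (shiftW v μ) t) (hu : IsSemistd (shiftW v μ) u)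
    (hz : ZeroRow t) (hz' : ZeroRow u) (j : ℕ) :
    colSet (shiftW v μ) t j = colSet (shiftW v μ) u j ↔
      colSet μ (DD t) j = colSet μ (DD u) j := by
  constructor
  · intro h
    ext b
    rw [← succ_mem_colSet_iff hμ hv ht hz b j, h, succ_mem_colSet_iff hμ hv hu hz' b j]
  · intro h
    ext a
    cases a with
    | zero =>
      constructor
      · intro h0
        exact zero_mem_colSet hμ hv hz' (lt_of_lt_of_le
          (colSet_lt_head (isPartition_shiftW hμ hv) h0) (le_of_eq (shiftW_zero v μ)))
      · intro h0
        exact zero_mem_colSet hμ hv hz (lt_of_lt_of_le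
          (colSet_lt_head (isPartition_shiftW hμ hv) h0) (le_of_eq (shiftW_zero v μ)))
    | succ b =>
      rw [succ_mem_colSet_iff hμ hv ht hz b j, h, ← succ_mem_colSet_iff hμ hv hu hz' b j]

lemma tabLT_shift (hμ : IsPartition μ) (hv : μ 0 ≤ v) {t u : Tab (shiftW v μ) ℕ}
    (ht : IsSemistd (shiftW v μ) t) (hu : IsSemistd (shiftW v μ) u)
    (hz : ZeroRow t) (hz' : ZeroRow u) :
    tabLT (shiftW v μ) t u ↔ tabLT μ (DD t) (DD u) := by
  constructor
  · rintro ⟨j, hne, hgt, m, hmu, hmt, hmax⟩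
    have hjv : j < v := lt_of_lt_of_le
      (colSet_lt_head (isPartition_shiftW hμ hv) hmu) (le_of_eq (shiftW_zero v μ))
    have hm0 : m ≠ 0 := by
      intro h0
      exact hmt (h0 ▸ zero_mem_colSet hμ hv hz hjv)
    obtain ⟨b, rfl⟩ : ∃ b, m = b + 1 := ⟨m - 1, by omega⟩
    refine ⟨j, ?_, ?_, b, ?_, ?_, ?_⟩
    · exact fun hc => hne ((colSet_eq_iff hμ hv ht hu hz hz' j).mpr hc)
    · exact fun j' hj' => (colSet_eq_iff hμ hv ht hu hz hz' j').mp (hgt j' hj')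
    · exact (succ_mem_colSet_iff hμ hv hu hz' b j).mp hmu
    · exact fun hc => hmt ((succ_mem_colSet_iff hμ hv ht hz b j).mpr hc)
    · rintro x (⟨hx1, hx2⟩ | ⟨hx1, hx2⟩)
      · have := hmax (x+1) (Or.inl ⟨(succ_mem_colSet_iff hμ hv ht hz x j).mpr hx1,
          fun hc => hx2 ((succ_mem_colSet_iff hμ hv hu hz' x j).mp hc)⟩)
        omega
      · have := hmax (x+1) (Or.inr ⟨(succ_mem_colSet_iff hμ hv hu hz' x j).mpr hx1,
          fun hc => hx2 ((succ_mem_colSet_iff hμ hv ht hz x j).mp hc)⟩)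
        omega
  · rintro ⟨j, hne, hgt, b, hbu, hbt, hmax⟩
    have hjv : j < v := lt_of_lt_of_le (colSet_lt_head hμ hbu) hv
    refine ⟨j, ?_, ?_, b + 1, ?_, ?_, ?_⟩
    · exact fun hc => hne ((colSet_eq_iff hμ hv ht hu hz hz' j).mp hc)
    · exact fun j' hj' => (colSet_eq_iff hμ hv ht hu hz hz' j').mpr (hgt j' hj')
    · exact (succ_mem_colSet_iff hμ hv hu hz' b j).mpr hbu
    · exact fun hc => hbt ((succ_mem_colSet_iff hμ hv ht hz b j).mp hc)
    · rintro x (⟨hx1, hx2⟩ | ⟨hx1, hx2⟩)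
      · have hx0 : x ≠ 0 := by
          intro h0
          exact hx2 (h0 ▸ zero_mem_colSet hμ hv hz' hjv)
        obtain ⟨y, rfl⟩ : ∃ y, x = y + 1 := ⟨x - 1, by omega⟩
        have := hmax y (Or.inl ⟨(succ_mem_colSet_iff hμ hv ht hz y j).mp hx1,
          fun hc => hx2 ((succ_mem_colSet_iff hμ hv hu hz' y j).mpr hc)⟩)
        omega
      · have hx0 : x ≠ 0 := by
          intro h0
          exact hx2 (h0 ▸ zero_mem_colSet hμ hv hz hjv)
        obtain ⟨y, rfl⟩ : ∃ y, x = y + 1 := ⟨x - 1, by omega⟩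
        have := hmax y (Or.inr ⟨(succ_mem_colSet_iff hμ hv hu hz' y j).mp hx1,
          fun hc => hx2 ((succ_mem_colSet_iff hμ hv ht hz y j).mpr hc)⟩)
        omega

lemma tabLE_shift (hμ : IsPartition μ) (hv : μ 0 ≤ v) {t u : Tab (shiftW v μ) ℕ}
    (ht : IsSemistd (shiftW v μ) t) (hu : IsSemistd (shiftW v μ) u)
    (hz : ZeroRow t) (hz' : ZeroRow u) :
    tabLE (shiftW v μ) t u ↔ tabLE μ (DD t) (DD u) := by
  unfold tabLE
  rw [tabLT_shift hμ hv ht hu hz hz']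
  constructor
  · rintro (h | h)
    · exact Or.inl (h ▸ rfl)
    · exact Or.inr h
  · rintro (h | h)
    · left
      rw [← UU_DD hμ hv ht hz, ← UU_DD hμ hv hu hz', h]
    · exact Or.inr h

/-- L6: bound on the number of zeros in any monomial of `s_ν ∘ s_{shiftW v μ}`. -/
lemma plethCoeff_head_bound (nuP : ℕ →₀ ℕ) (hμ : IsPartition μ) (hv : μ 0 ≤ v) {β : ℕ →₀ ℕ}
    (h : plethCoeff nuP (shiftW v μ) β ≠ 0) :
    β 0 ≤ (Finset.univ : Finset (Cell nuP)).card * v := by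
  have hne : Nonempty {T : Tab nuP (SSYT (shiftW v μ) ℕ) // IsPSSYT (shiftW v μ) nuP T ∧
      HasWeight (shiftW v μ) nuP T (fun b => β b)} := by
    by_contra hc
    exact h (Nat.card_eq_zero.mpr (Or.inl (not_nonempty_iff.mp hc)))
  obtain ⟨T, _, hw⟩ := hne.some
  have h0 : β 0 = ∑ P : Cell nuP,
      (Finset.univ.filter (fun p : Cell (shiftW v μ) => (T P).1 p = 0)).card := hw 0
  rw [h0]
  calc (∑ P : Cell nuP,
      (Finset.univ.filter (fun p : Cell (shiftW v μ) => (T P).1 p = 0)).card)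
      ≤ ∑ _P : Cell nuP, v := by
        apply Finset.sum_le_sum
        intro Q _
        have hq := zeros_le_row0 (isPartition_shiftW hμ hv) (T Q).2
        rwa [shiftW_zero] at hq
    _ = (Finset.univ : Finset (Cell nuP)).card * v := by
        rw [Finset.sum_const, smul_eq_mul]

/-- L7: the main bijection on plethystic tableaux. -/
lemma plethCoeff_shiftW (nuP : ℕ →₀ ℕ) (hμ : IsPartition μ) (hv : μ 0 ≤ v) (β : ℕ →₀ ℕ) :
    plethCoeff nuP (shiftW v μ)
      (shiftW ((Finset.univ : Finset (Cell nuP)).card * v) β) = plethCoeff nuP μ β := by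
  have key : ∀ (T : Tab nuP (SSYT (shiftW v μ) ℕ)),
      HasWeight (shiftW v μ) nuP T
        (fun b => (shiftW ((Finset.univ : Finset (Cell nuP)).card * v) β) b) →
      ∀ P : Cell nuP, ZeroRow ((T P).1) := by
    intro T hw P
    apply zeroRow_of_card hμ hv (T P).2
    have h0 : shiftW ((Finset.univ : Finset (Cell nuP)).card * v) β 0 = ∑ Q : Cell nuP,
        (Finset.univ.filter (fun p : Cell (shiftW v μ) => (T Q).1 p = 0)).card := hw 0
    rw [shiftW_zero] at h0
    have hle : ∀ Q : Cell nuP, Q ∈ (Finset.univ : Finset (Cell nuP)) →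
        (Finset.univ.filter (fun p : Cell (shiftW v μ) => (T Q).1 p = 0)).card ≤ v := by
      intro Q _
      have hq := zeros_le_row0 (isPartition_shiftW hμ hv) (T Q).2
      rwa [shiftW_zero] at hq
    by_contra hc
    have hlt := lt_of_le_of_ne (hle P (Finset.mem_univ P)) hc
    have hsum : (∑ Q : Cell nuP, (Finset.univ.filter
        (fun p : Cell (shiftW v μ) => (T Q).1 p = 0)).card) <
        ∑ _Q : Cell nuP, v :=
      Finset.sum_lt_sum hle ⟨P, Finset.mem_univ P, hlt⟩
    rw [← h0, Finset.sum_const, smul_eq_mul] at hsum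
    omega
  apply Nat.card_congr
  refine ⟨fun x => ⟨fun P => ⟨DD (x.1 P).1, DD_semistd hμ hv (x.1 P).2⟩, ?_, ?_⟩,
          fun y => ⟨fun P => ⟨UU (y.1 P).1, UU_semistd (y.1 P).2⟩, ?_, ?_⟩, ?_, ?_⟩
  · -- IsPSSYT downstairs
    obtain ⟨T, ⟨hrows, hcols⟩, hw⟩ := x
    have hz := key T hw
    constructor
    · intro P Q h1 h2
      exact (tabLE_shift hμ hv (T P).2 (T Q).2 (hz P) (hz Q)).mp (hrows P Q h1 h2)
    · intro P Q h1 h2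
      exact (tabLT_shift hμ hv (T P).2 (T Q).2 (hz P) (hz Q)).mp (hcols P Q h1 h2)
  · -- weight downstairs
    obtain ⟨T, hP, hw⟩ := x
    have hz := key T hw
    intro b
    have hwb : shiftW ((Finset.univ : Finset (Cell nuP)).card * v) β (b+1) = ∑ P : Cell nuP,
        (Finset.univ.filter (fun p : Cell (shiftW v μ) => (T P).1 p = b + 1)).card := hw (b+1)
    rw [shiftW_succ] at hwb
    show β b = ∑ P : Cell nuP,
      (Finset.univ.filter (fun p : Cell μ => DD ((T P).1) p = b)).card
    rw [hwb]
    exact Finset.sum_congr rfl (fun P _ => (fiber_card hμ hv (T P).2 (hz P) b).symm)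
  · -- IsPSSYT upstairs
    obtain ⟨S, ⟨hrows, hcols⟩, hw⟩ := y
    constructor
    · intro P Q h1 h2
      apply (tabLE_shift hμ hv (UU_semistd (S P).2) (UU_semistd (S Q).2)
        (zeroRow_UU _) (zeroRow_UU _)).mpr
      rw [DD_UU, DD_UU]
      exact hrows P Q h1 h2
    · intro P Q h1 h2
      apply (tabLT_shift hμ hv (UU_semistd (S P).2) (UU_semistd (S Q).2)
        (zeroRow_UU _) (zeroRow_UU _)).mpr
      rw [DD_UU, DD_UU]
      exact hcols P Q h1 h2
  · -- weight upstairs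
    obtain ⟨S, hP, hw⟩ := y
    intro b
    show (shiftW ((Finset.univ : Finset (Cell nuP)).card * v) β) b = ∑ P : Cell nuP,
      (Finset.univ.filter (fun p : Cell (shiftW v μ) => UU ((S P).1) p = b)).card
    cases b with
    | zero =>
      rw [shiftW_zero,
        Finset.sum_congr rfl (fun (P : Cell nuP) _ =>
          zeros_card hμ hv (UU_semistd (S P).2) (zeroRow_UU _)),
        Finset.sum_const, smul_eq_mul]
    | succ b =>
      have hwb : β b = ∑ P : Cell nuP,
          (Finset.univ.filter (fun p : Cell μ => (S P).1 p = b)).card := hw b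
      rw [shiftW_succ, hwb]
      apply Finset.sum_congr rfl
      intro P _
      have hf := fiber_card hμ hv (UU_semistd (S P).2) (zeroRow_UU (v := v) ((S P).1)) b
      rw [DD_UU] at hf
      exact hf
  · -- left inverse
    intro x
    apply Subtype.ext
    funext P
    apply Subtype.ext
    show UU (DD (x.1 P).1) = (x.1 P).1
    exact UU_DD hμ hv (x.1 P).2 (key x.1 x.2.2 P)
  · -- right inverse
    intro y
    apply Subtype.ext
    funext P
    apply Subtype.ext
    show DD (UU (y.1 P).1) = (y.1 P).1
    exact DD_UU (y.1 P).1

end Batch5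

section Batch6

noncomputable def wRank (N : ℕ) (f : ℕ →₀ ℕ) : ℕ :=
  ∑ k ∈ Finset.range (N+1), ∑ i ∈ Finset.range k, f i

lemma wRank_lt {N : ℕ} {f g : ℕ →₀ ℕ} (hf : IsPartitionOf f N) (hg : IsPartitionOf g N)
    (hd : Dominates f g) (hne : f ≠ g) : wRank N g < wRank N f := by
  classical
  have hex : ∃ i, f i ≠ g i := by
    by_contra h2
    push_neg at h2
    exact hne (Finsupp.ext h2)
  set i := Nat.find hex with hidef
  have hi : f i ≠ g i := Nat.find_spec hex
  have hmin : ∀ j, j < i → f j = g j := by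
    intro j hj
    by_contra h2
    exact Nat.find_min hex hj h2
  have hpre : ∑ j ∈ Finset.range i, f j = ∑ j ∈ Finset.range i, g j :=
    Finset.sum_congr rfl (fun j hj => hmin j (Finset.mem_range.mp hj))
  have hstrict : ∑ j ∈ Finset.range (i+1), g j < ∑ j ∈ Finset.range (i+1), f j := by
    have hdi := hd (i+1)
    rw [Finset.sum_range_succ, Finset.sum_range_succ, hpre] at hdi ⊢
    omega
  have hiN : i + 1 ≤ N := by
    by_cases h0 : f i = 0
    · have hg0 : g i ≠ 0 := by omega
      exact hg.lt_of_ne_zero hg0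
    · exact hf.lt_of_ne_zero h0
  exact Finset.sum_lt_sum (fun k _ => hd k)
    ⟨i+1, Finset.mem_range.mpr (by omega), hstrict⟩

/-- L1: uniqueness of coefficients in a Schur-like triangular expansion. -/
lemma coeff_unique {N : ℕ} (a b : (ℕ →₀ ℕ) → ℕ)
    (ha0 : (Function.support a).Finite) (hb0 : (Function.support b).Finite)
    (ha1 : ∀ κ, a κ ≠ 0 → IsPartitionOf κ N) (hb1 : ∀ κ, b κ ≠ 0 → IsPartitionOf κ N)
    (h : ∀ lt : ℕ →₀ ℕ, IsPartitionOf lt N →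
      ∑ᶠ κ, a κ * schurCoeff κ lt = ∑ᶠ κ, b κ * schurCoeff κ lt) :
    a = b := by
  classical
  by_contra hne
  set S : Finset (ℕ →₀ ℕ) := ha0.toFinset ∪ hb0.toFinset with hS
  have hsupS : ∀ κ, κ ∉ S → a κ = b κ := by
    intro κ hκ
    simp only [hS, Finset.mem_union, Set.Finite.mem_toFinset, Function.mem_support,
      not_or, not_not] at hκ
    rw [hκ.1, hκ.2]
  set T : Finset (ℕ →₀ ℕ) := S.filter (fun κ => a κ ≠ b κ) with hT
  have hTne : T.Nonempty := by
    have hex : ∃ κ, a κ ≠ b κ := by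
      by_contra h2
      push_neg at h2
      exact hne (funext h2)
    obtain ⟨κ, hκ⟩ := hex
    refine ⟨κ, Finset.mem_filter.mpr ⟨?_, hκ⟩⟩
    by_contra h2
    exact hκ (hsupS κ h2)
  obtain ⟨κ0, hκ0T, hmax⟩ := T.exists_max_image (wRank N) hTne
  have hκ0S : κ0 ∈ S := (Finset.mem_filter.mp hκ0T).1
  have hκ0ne : a κ0 ≠ b κ0 := (Finset.mem_filter.mp hκ0T).2
  have hpart : ∀ κ, κ ∈ T → IsPartitionOf κ N := by
    intro κ hκ
    have hab := (Finset.mem_filter.mp hκ).2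
    by_cases h0 : a κ = 0
    · exact hb1 κ (by omega)
    · exact ha1 κ h0
  have hκ0P : IsPartitionOf κ0 N := hpart κ0 hκ0T
  have heq := h κ0 hκ0P
  have hconv : ∀ (c : (ℕ →₀ ℕ) → ℕ) (hc : (Function.support c).Finite),
      hc.toFinset ⊆ S →
      ∑ᶠ κ, c κ * schurCoeff κ κ0 = ∑ κ ∈ S, c κ * schurCoeff κ κ0 := by
    intro c hc hsub
    apply finsum_eq_finset_sum_of_support_subset
    intro κ hκ
    rw [Function.mem_support] at hκ
    have hcκ : c κ ≠ 0 := fun h0 => hκ (by rw [h0, zero_mul])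
    exact Finset.mem_coe.mpr (hsub (hc.mem_toFinset.mpr hcκ))
  rw [hconv a ha0 (fun x hx => Finset.mem_union_left _ hx),
      hconv b hb0 (fun x hx => Finset.mem_union_right _ hx)] at heq
  rw [← Finset.add_sum_erase S (fun κ => a κ * schurCoeff κ κ0) hκ0S,
      ← Finset.add_sum_erase S (fun κ => b κ * schurCoeff κ κ0) hκ0S] at heq
  have herase : ∑ κ ∈ S.erase κ0, a κ * schurCoeff κ κ0 =
      ∑ κ ∈ S.erase κ0, b κ * schurCoeff κ κ0 := by
    apply Finset.sum_congr rfl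
    intro κ hκ
    obtain ⟨hκne, hκS⟩ := Finset.mem_erase.mp hκ
    by_cases hab : a κ = b κ
    · rw [hab]
    · have hκT : κ ∈ T := Finset.mem_filter.mpr ⟨hκS, hab⟩
      have hκP := hpart κ hκT
      by_cases hK : schurCoeff κ κ0 = 0
      · rw [hK, mul_zero, mul_zero]
      · exfalso
        have hdom := dominates_of_schurCoeff_ne_zero hκP.1 hK
        have h1 := wRank_lt hκP hκ0P hdom hκne
        have h2 := hmax κ hκT
        omega
  rw [herase] at heq
  have hKd := schurCoeff_diag hκ0P.1
  simp only [hKd, mul_one] at heq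
  omega

/-- A nonzero coefficient in an expansion forces a nonzero coefficient function value. -/
lemma pleth_ne_zero_of_coeff {nuP rhoP : ℕ →₀ ℕ} {M : ℕ} {c' : (ℕ →₀ ℕ) → ℕ}
    (hc'0 : (Function.support c').Finite)
    (hc'1 : ∀ κ, c' κ ≠ 0 → IsPartitionOf κ M)
    (hc' : ∀ α : ℕ →₀ ℕ, plethCoeff nuP rhoP α = ∑ᶠ κ, c' κ * schurCoeff κ α)
    {τ : ℕ →₀ ℕ} (hτ : c' τ ≠ 0) : plethCoeff nuP rhoP τ ≠ 0 := by
  rw [hc' τ]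
  have hsupfin : (Function.support (fun κ => c' κ * schurCoeff κ τ)).Finite := by
    apply hc'0.subset
    intro κ hκ
    rw [Function.mem_support] at hκ ⊢
    exact fun h0 => hκ (by rw [h0, zero_mul])
  have h1 : c' τ * schurCoeff τ τ ≤ ∑ᶠ κ, c' κ * schurCoeff κ τ :=
    single_le_finsum τ hsupfin (fun j => Nat.zero_le _)
  rw [schurCoeff_diag (hc'1 τ hτ).1, mul_one] at h1
  omega

/-- Reindexing the `c'`-expansion along `shiftW`. -/
lemma sum_reindex {c' : (ℕ →₀ ℕ) → ℕ} (hc'0 : (Function.support c').Finite) {M w : ℕ}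
    (hc'1 : ∀ κ, c' κ ≠ 0 → IsPartitionOf κ M)
    (hbound : ∀ τ, c' τ ≠ 0 → τ 0 ≤ w)
    (lt : ℕ →₀ ℕ) :
    ∑ᶠ τ, c' τ * schurCoeff τ (shiftW w lt) =
    ∑ᶠ κ, c' (shiftW w κ) * schurCoeff κ lt := by
  classical
  set S : Finset (ℕ →₀ ℕ) := hc'0.toFinset with hSdef
  set S' : Finset (ℕ →₀ ℕ) := S.filter (fun τ => τ 0 = w) with hS'def
  have hmemS : ∀ τ, τ ∈ S ↔ c' τ ≠ 0 := fun τ => hc'0.mem_toFinset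
  have hL : ∑ᶠ τ, c' τ * schurCoeff τ (shiftW w lt) =
      ∑ τ ∈ S', c' τ * schurCoeff τ (shiftW w lt) := by
    rw [finsum_eq_finset_sum_of_support_subset _ (s := S) (by
      intro τ hτ
      rw [Function.mem_support] at hτ
      exact Finset.mem_coe.mpr ((hmemS τ).mpr (fun h0 => hτ (by rw [h0, zero_mul]))))]
    symm
    apply Finset.sum_subset (Finset.filter_subset _ _)
    intro τ hτS hτn
    have hcne : c' τ ≠ 0 := (hmemS τ).mp hτS
    have hτ0 : τ 0 ≠ w := by
      intro h0
      exact hτn (Finset.mem_filter.mpr ⟨hτS, h0⟩)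
    have hK : schurCoeff τ (shiftW w lt) = 0 := by
      by_contra hK
      have hdom := dominates_of_schurCoeff_ne_zero (hc'1 τ hcne).1 hK
      have hd1 := hdom 1
      rw [Finset.sum_range_one, Finset.sum_range_one, shiftW_zero] at hd1
      have hub := hbound τ hcne
      omega
    rw [hK, mul_zero]
  have hR : ∑ᶠ κ, c' (shiftW w κ) * schurCoeff κ lt =
      ∑ κ ∈ S'.image down, c' (shiftW w κ) * schurCoeff κ lt := by
    apply finsum_eq_finset_sum_of_support_subset
    intro κ hκ
    rw [Function.mem_support] at hκ
    have hcne : c' (shiftW w κ) ≠ 0 := fun h0 => hκ (by rw [h0, zero_mul])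
    have hmem : shiftW w κ ∈ S' := Finset.mem_filter.mpr
      ⟨(hmemS _).mpr hcne, shiftW_zero w κ⟩
    exact Finset.mem_coe.mpr (Finset.mem_image.mpr ⟨shiftW w κ, hmem, down_shiftW w κ⟩)
  have hinj : ∀ x ∈ S', ∀ y ∈ S', down x = down y → x = y := by
    intro x hx y hy hxy
    have h1 : shiftW w (down x) = shiftW w (down y) := by rw [hxy]
    rwa [shiftW_down (Finset.mem_filter.mp hx).2,
      shiftW_down (Finset.mem_filter.mp hy).2] at h1
  rw [hL, hR, Finset.sum_image hinj]
  apply Finset.sum_congr rfl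
  intro τ hτ
  have hτ0 : τ 0 = w := (Finset.mem_filter.mp hτ).2
  have hcne : c' τ ≠ 0 := (hmemS τ).mp (Finset.mem_filter.mp hτ).1
  have hP : IsPartition τ := (hc'1 τ hcne).1
  rw [shiftW_down hτ0]
  congr 1
  have hτeq : τ = shiftW w (down τ) := (shiftW_down hτ0).symm
  calc schurCoeff τ (shiftW w lt)
      = schurCoeff (shiftW w (down τ)) (shiftW w lt) := by rw [← hτeq]
    _ = schurCoeff (down τ) (down (shiftW w lt)) := by
        apply schurCoeff_shiftW (isPartition_down hP) ?_ _ (shiftW_zero w lt)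
        have h1 : down τ 0 = τ 1 := rfl
        have h2 := hP 0 1 (by omega)
        omega
    _ = schurCoeff (down τ) lt := by rw [down_shiftW]
end Batch6

/-- **Theorem 1 (de Boeck–Paget–Wildon).**
Let `μ ⊢ m`, `ν ⊢ n`, `λ ⊢ mn`.  If `r` is at least the greatest part of `μ` then
`⟨s_ν ∘ s_{(r) ⊔ μ}, s_{(nr) ⊔ λ}⟩ = ⟨s_ν ∘ s_μ, s_λ⟩`.
Here `ρ = (r) ⊔ μ` and `σ = (nr) ⊔ λ` are specified by their multisets of parts, and the
plethysm coefficients `⟨s_ν ∘ s_μ, s_λ⟩` are expressed through (arbitrary) expansions of the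
plethysms in the basis of Schur functions: `c` and `c'` are coefficient functions, supported
on partitions of the appropriate size, with
`s_ν ∘ s_μ = ∑_κ c κ · s_κ` and `s_ν ∘ s_ρ = ∑_κ c' κ · s_κ`
(an identity of symmetric functions, checked monomial by monomial). -/
theorem mult_cons_eq (m n r : ℕ) (hm : 0 < m) (hn : 0 < n) (hr : 0 < r)
    (mu nu lam rho sigma : ℕ →₀ ℕ)
    (hmu : IsPartitionOf mu m) (hnu : IsPartitionOf nu n) (hlam : IsPartitionOf lam (m * n))
    (hrbig : mu 0 ≤ r)
    (hrho : IsPartition rho) (hrhoparts : partsOf rho = r ::ₘ partsOf mu)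
    (hsigma : IsPartition sigma) (hsigmaparts : partsOf sigma = (n * r) ::ₘ partsOf lam)
    (c c' : (ℕ →₀ ℕ) → ℕ)
    (hc0 : (Function.support c).Finite)
    (hc1 : ∀ κ, c κ ≠ 0 → IsPartitionOf κ (m * n))
    (hc : ∀ α : ℕ →₀ ℕ, plethCoeff nu mu α = ∑ᶠ κ, c κ * schurCoeff κ α)
    (hc'0 : (Function.support c').Finite)
    (hc'1 : ∀ κ, c' κ ≠ 0 → IsPartitionOf κ ((m + r) * n))
    (hc' : ∀ α : ℕ →₀ ℕ, plethCoeff nu rho α = ∑ᶠ κ, c' κ * schurCoeff κ α) :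
    c' sigma = c lam := by
  classical
  have hcells_nu : (Finset.univ : Finset (Cell nu)).card = n := by
    rw [card_cells nu, hnu.2]
  have hrho_eq : rho = shiftW r mu := by
    apply parts_inj hrho (isPartition_shiftW hmu.1 hrbig)
    rw [hrhoparts, partsOf_shiftW hr mu]
  have hnr1 : 1 ≤ n * r := Nat.mul_pos hn hr
  have hkey : ∀ β : ℕ →₀ ℕ, plethCoeff nu rho (shiftW (n * r) β) = plethCoeff nu mu β := by
    intro β
    have hh := plethCoeff_shiftW nu hmu.1 hrbig β
    rw [hcells_nu] at hh
    rw [hrho_eq]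
    exact hh
  have hbound : ∀ τ, c' τ ≠ 0 → τ 0 ≤ n * r := by
    intro τ hτ
    have hp : plethCoeff nu rho τ ≠ 0 := pleth_ne_zero_of_coeff hc'0 hc'1 hc' hτ
    rw [hrho_eq] at hp
    have hb := plethCoeff_head_bound nu hmu.1 hrbig hp
    rwa [hcells_nu] at hb
  have hsys : ∀ lt : ℕ →₀ ℕ, IsPartitionOf lt (m*n) →
      ∑ᶠ κ, c' (shiftW (n*r) κ) * schurCoeff κ lt = ∑ᶠ κ, c κ * schurCoeff κ lt := by
    intro lt _
    rw [← sum_reindex hc'0 hc'1 hbound lt, ← hc' (shiftW (n*r) lt), hkey lt, hc lt]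
  have he0 : (Function.support (fun κ : ℕ →₀ ℕ => c' (shiftW (n*r) κ))).Finite := by
    have hpre : Function.support (fun κ : ℕ →₀ ℕ => c' (shiftW (n*r) κ)) =
        (fun κ : ℕ →₀ ℕ => shiftW (n*r) κ) ⁻¹' (Function.support c') := rfl
    rw [hpre]
    apply Set.Finite.preimage ?_ hc'0
    intro x _ y _ hxy
    have hd := congrArg down hxy
    rwa [down_shiftW, down_shiftW] at hd
  have he1 : ∀ κ, (fun κ : ℕ →₀ ℕ => c' (shiftW (n*r) κ)) κ ≠ 0 →
      IsPartitionOf κ (m*n) := by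
    intro κ hκ
    have hP := hc'1 _ hκ
    constructor
    · have hd := isPartition_down hP.1
      rwa [down_shiftW] at hd
    · have hsum := hP.2
      rw [sum_shiftW] at hsum
      have hring : (m + r) * n = m * n + n * r := by ring
      omega
  have hedef := coeff_unique (fun κ => c' (shiftW (n*r) κ)) c he0 hc0 he1 hc1 hsys
  by_cases hle : lam 0 ≤ n * r
  · have hsig : sigma = shiftW (n*r) lam := by
      apply parts_inj hsigma (isPartition_shiftW hlam.1 hle)
      rw [hsigmaparts, partsOf_shiftW hnr1 lam]
    rw [hsig]
    exact congrFun hedef lam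
  · push_neg at hle
    have hc'shift : c' (shiftW (n*r) lam) = 0 := by
      by_contra h0
      exact (not_isPartition_shiftW hle) (hc'1 _ h0).1
    have hclam : c lam = 0 := by
      have := congrFun hedef lam
      omega
    have hσ0 : n * r < sigma 0 := by
      have hmem : lam 0 ∈ partsOf sigma := by
        rw [hsigmaparts]
        apply Multiset.mem_cons_of_mem
        rw [partsOf, Multiset.mem_map]
        exact ⟨0, Finset.mem_val.mpr (Finsupp.mem_support_iff.mpr (by omega)), rfl⟩
      have := le_head_of_mem_partsOf hsigma hmem
      omega
    have hc'sig : c' sigma = 0 := by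
      by_contra h0
      have hb := hbound sigma h0
      omega
    rw [hc'sig, hclam]


end Pleth
end

section
/- Let λ be a partition, let 1 ≤ j < j' ≤ λ_1 and 1 ≤ i ≤ λ'_{j'} (where λ' is the conjugate partition). Define A_λ(i,j) = {(i,j), (i+1,j), …, (λ'_j, j)} and B_λ(i,j') = {(1,j'), (2,j'), …, (i,j')}, subsets of the Young diagram [λ]. Then for every λ-tableau t with entries from B, ∑_τ sgn(τ) F(tτ) = 0, where the sum is over all permutations τ of the set A_λ(i,j) ∪ B_λ(i,j'). -/
open scoped Classical

namespace Pleth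

/-- The canonical index type for the basis of `Sym^lam V`, where `V` is free with basis `B`:
one multiset of entries (of the right size) for each row of the Young diagram. -/
abbrev RowData (lam : ℕ →₀ ℕ) (B : Type*) : Type _ := (i : ℕ) → Sym B (lam i)

/-- A concrete model for `Sym^lam V = ⊗_i Sym^{lam_i} V`, where `V` is the free `K`-module
with basis `{v_b : b ∈ B}`:  the free `K`-module on the GL-tabloids, i.e. on `RowData lam B`. -/
abbrev SymMod (lam : ℕ →₀ ℕ) (B : Type*) (K : Type*) [Semiring K] : Type _ :=
  RowData lam B →₀ K

/-- The multisets of row entries of a tableau. -/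
def rowData (lam : ℕ →₀ ℕ) {B : Type*} (t : Tab lam B) : RowData lam B := fun i =>
  ⟨(Finset.range (lam i)).attach.val.map
      (fun j => t ⟨(i, j.1), mem_cells.mpr (Finset.mem_range.mp j.2)⟩), by rw [Multiset.card_map, ← Finset.card_def, Finset.card_attach, Finset.card_range]⟩

/-- The GL-tabloid `f(t) = ⊗_i ∏_j v_{t(i,j)} ∈ Sym^lam V`. -/
noncomputable def tabloid (K : Type*) [CommRing K] (lam : ℕ →₀ ℕ) {B : Type*}
    (t : Tab lam B) : SymMod lam B K :=
  Finsupp.single (rowData lam t) 1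

/-- The place-permutation action: `(t σ) (x) = t (σ⁻¹ x)`. -/
def permTab (lam : ℕ →₀ ℕ) {B : Type*} (t : Tab lam B) (σ : Equiv.Perm (Cell lam)) :
    Tab lam B := fun p => t (σ⁻¹ p)

/-- `σ` preserves each column of the Young diagram, i.e. `σ ∈ CPP(lam)`. -/
def ColPres (lam : ℕ →₀ ℕ) (σ : Equiv.Perm (Cell lam)) : Prop :=
  ∀ p : Cell lam, (σ p).1.2 = p.1.2

/-- The GL-polytabloid `F(t) = ∑_{σ ∈ CPP(lam)} sgn(σ) f(tσ)`. -/
noncomputable def polytabloid (K : Type*) [CommRing K] (lam : ℕ →₀ ℕ) {B : Type*}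
    (t : Tab lam B) : SymMod lam B K :=
  ∑ σ : Equiv.Perm (Cell lam),
    if ColPres lam σ then ((Equiv.Perm.sign σ : ℤ) • tabloid K lam (permTab lam t σ)) else 0

/-- `∇^lam (V)`: the `K`-submodule of `Sym^lam V` spanned by the GL-polytabloids. -/
noncomputable def nabla (K : Type*) [CommRing K] (lam : ℕ →₀ ℕ) (B : Type*) :
    Submodule K (SymMod lam B K) :=
  Submodule.span K (Set.range (fun t : Tab lam B => polytabloid K lam t))

/-- The number of entries `≤ b` in row `i` of `t`; as a function of `i` this is the
composition `t^{≤ b}`. -/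
noncomputable def rowCountLe (lam : ℕ →₀ ℕ) {B : Type*} [LinearOrder B] (t : Tab lam B)
    (b : B) (i : ℕ) : ℕ :=
  (Finset.univ.filter (fun p : Cell lam => p.1.1 = i ∧ t p ≤ b)).card

/-- The dominance order on (row-semistandard) tableaux of the same shape:
`t ⊵ u` iff `t^{≤b} ⊵ u^{≤b}` for every `b`. -/
def TabDom (lam : ℕ →₀ ℕ) {B : Type*} [LinearOrder B] (t u : Tab lam B) : Prop :=
  ∀ b : B, ∀ k : ℕ,
    ∑ i ∈ Finset.range k, rowCountLe lam u b i ≤ ∑ i ∈ Finset.range k, rowCountLe lam t b i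

/-- `t̄`: the tableau obtained from `t` by sorting each row into weakly increasing order. -/
noncomputable def rowsort (lam : ℕ →₀ ℕ) {B : Type*} [LinearOrder B] (t : Tab lam B) :
    Tab lam B :=
  fun p => (List.insertionSort (· ≤ ·) ((List.range (lam p.1.1)).attach.map
      (fun j => t ⟨(p.1.1, j.1), mem_cells.mpr (List.mem_range.mp j.2)⟩))).getD p.1.2 (t p)

end Pleth

namespace Pleth

lemma permTab_mul {B : Type*} (lam : ℕ →₀ ℕ) (t : Tab lam B) (σ τ : Equiv.Perm (Cell lam)) :
    permTab lam (permTab lam t τ) σ = permTab lam t (σ * τ) := by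
  funext p
  simp [permTab, mul_inv_rev, Equiv.Perm.mul_apply]

lemma rowData_precomp {B : Type*} (lam : ℕ →₀ ℕ) (u : Tab lam B) (s : Equiv.Perm (Cell lam))
    (hs : ∀ p : Cell lam, (s p).1.1 = p.1.1) :
    rowData lam (fun p => u (s p)) = rowData lam u := by
  classical
  funext i
  apply Subtype.ext
  simp only [rowData]
  have hc : ∀ j : {j // j ∈ Finset.range (lam i)}, ((i, j.1) : ℕ × ℕ) ∈ cells lam :=
    fun j => mem_cells.mpr (Finset.mem_range.mp j.2)
  set cell : {j // j ∈ Finset.range (lam i)} → Cell lam := fun j => ⟨(i, j.1), hc j⟩ with hcell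
  have hmem : ∀ j, (s (cell j)).1.2 ∈ Finset.range (lam i) := by
    intro j
    have h1 : (s (cell j)).1.1 = i := hs (cell j)
    have h2 := mem_cells.mp (s (cell j)).2
    rw [h1] at h2
    exact Finset.mem_range.mpr h2
  set f : {j // j ∈ Finset.range (lam i)} → {j // j ∈ Finset.range (lam i)} :=
    fun j => ⟨(s (cell j)).1.2, hmem j⟩ with hf
  have hscell : ∀ j, s (cell j) = cell (f j) := by
    intro j
    apply Subtype.ext
    have h1 : (s (cell j)).1.1 = i := hs (cell j)
    exact Prod.ext h1 rfl
  have hinj : Function.Injective f := by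
    intro a b hab
    have : s (cell a) = s (cell b) := by rw [hscell a, hscell b, hab]
    have := s.injective this
    apply Subtype.ext
    exact congrArg (fun c : Cell lam => c.1.2) this
  let e : Equiv.Perm {j // j ∈ Finset.range (lam i)} :=
    Equiv.ofBijective f (Finite.injective_iff_bijective.mp hinj)
  have huniv : (Finset.univ.val.map (⇑e) : Multiset _) = Finset.univ.val := by
    have := Finset.map_univ_equiv e
    calc Finset.univ.val.map ⇑e = (Finset.univ.map e.toEmbedding).val := by
          rw [Finset.map_val]; rfl
        _ = Finset.univ.val := by rw [this]
  calc ((Finset.range (lam i)).attach.val.map (fun j => u (s (cell j))))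
      = Finset.univ.val.map (fun j => u (cell (e j))) := by
        rw [Finset.attach_eq_univ]
        congr 1
        funext j
        rw [hscell j]
        rfl
    _ = (Finset.univ.val.map ⇑e).map (fun j => u (cell j)) := by
        rw [Multiset.map_map]
        rfl
    _ = Finset.univ.val.map (fun j => u (cell j)) := by rw [huniv]
    _ = (Finset.range (lam i)).attach.val.map (fun j => u (cell j)) := by
        rw [Finset.attach_eq_univ]

lemma tabloid_rowpres (K : Type*) [CommRing K] {B : Type*} (lam : ℕ →₀ ℕ) (t : Tab lam B)
    (s π : Equiv.Perm (Cell lam)) (hs : ∀ p : Cell lam, (s p).1.1 = p.1.1) :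
    tabloid K lam (permTab lam t (s * π)) = tabloid K lam (permTab lam t π) := by
  unfold tabloid
  congr 1
  have h1 : permTab lam t (s * π) = fun p => (permTab lam t π) (s⁻¹ p) := by
    funext p
    simp [permTab, mul_inv_rev, Equiv.Perm.mul_apply]
  rw [h1]
  exact rowData_precomp lam (permTab lam t π) s⁻¹ (fun p => by
    have := hs (s⁻¹ p); rw [← Equiv.Perm.mul_apply, mul_inv_cancel, Equiv.Perm.one_apply] at this; exact this.symm)

end Pleth
namespace Pleth

section Garnir

variable {B : Type*} (lam : ℕ →₀ ℕ) (i j j' : ℕ)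

/-- The snake `A ∪ B`. -/
def snake (p : Cell lam) : Prop := (p.1.2 = j ∧ i ≤ p.1.1) ∨ (p.1.2 = j' ∧ p.1.1 ≤ i)

variable {lam i j j'}

lemma snake_card (hlam : IsPartition lam) (hjj' : j < j')
    (hcell : ((i, j') : ℕ × ℕ) ∈ cells lam) :
    ((lam.support.filter (fun r => j < lam r)).card : ℕ) <
      (Finset.univ.filter (fun p : Cell lam => snake lam i j j' p)).card := by
  classical
  have hij' : j' < lam i := mem_cells.mp hcell
  have hlow : ∀ r, r ≤ i → j' < lam r := fun r hr => lt_of_lt_of_le hij' (hlam r i hr)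
  set SA : Finset (Cell lam) := Finset.univ.filter (fun p => p.1.2 = j ∧ i ≤ p.1.1) with hSAdef
  set SB : Finset (Cell lam) := Finset.univ.filter (fun p => p.1.2 = j' ∧ p.1.1 ≤ i) with hSBdef
  set Rfin : Finset ℕ := lam.support.filter (fun r => j < lam r) with hRdef
  set RA : Finset ℕ := Rfin.filter (fun r => i ≤ r) with hRAdef
  have hS : (Finset.univ.filter (fun p : Cell lam => snake lam i j j' p)) = SA ∪ SB := by
    ext p
    simp only [Finset.mem_filter, Finset.mem_union, Finset.mem_univ, true_and, snake, hSAdef, hSBdef]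
    exact (@Finset.mem_filter _ _ (fun _ => Classical.propDecidable _) _ _).trans (and_iff_right (Finset.mem_attach _ _))
  have hdisj : Disjoint SA SB := by
    rw [Finset.disjoint_left]
    intro p hp hq
    have h1 := (Finset.mem_filter.mp hp).2.1
    have h2 := (Finset.mem_filter.mp hq).2.1
    omega
  have hmemR : ∀ r, j < lam r → r ∈ Rfin := by
    intro r hr
    exact Finset.mem_filter.mpr ⟨Finsupp.mem_support_iff.mpr (by omega), hr⟩
  have hSA : SA.card = RA.card := by
    apply Finset.card_bij (fun p _ => p.1.1)
    · intro p hp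
      obtain ⟨-, hcol, hrow⟩ := Finset.mem_filter.mp hp
      have hc := mem_cells.mp p.2
      rw [hcol] at hc
      exact Finset.mem_filter.mpr ⟨hmemR _ hc, hrow⟩
    · intro p hp q hq hpq
      obtain ⟨-, hcolp, -⟩ := Finset.mem_filter.mp hp
      obtain ⟨-, hcolq, -⟩ := Finset.mem_filter.mp hq
      exact Subtype.ext (Prod.ext hpq (by rw [hcolp, hcolq]))
    · intro r hr
      obtain ⟨hr1, hr2⟩ := Finset.mem_filter.mp hr
      have hjr : j < lam r := (Finset.mem_filter.mp hr1).2
      exact ⟨⟨(r, j), mem_cells.mpr hjr⟩,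
        Finset.mem_filter.mpr ⟨Finset.mem_univ _, rfl, hr2⟩, rfl⟩
  have hSB : SB.card = i + 1 := by
    have : SB.card = (Finset.range (i+1)).card := by
      apply Finset.card_bij (fun p _ => p.1.1)
      · intro p hp
        obtain ⟨-, -, hrow⟩ := Finset.mem_filter.mp hp
        exact Finset.mem_range.mpr (by omega)
      · intro p hp q hq hpq
        obtain ⟨-, hcolp, -⟩ := Finset.mem_filter.mp hp
        obtain ⟨-, hcolq, -⟩ := Finset.mem_filter.mp hq
        exact Subtype.ext (Prod.ext hpq (by rw [hcolp, hcolq]))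
      · intro r hr
        have hri : r ≤ i := Nat.lt_succ_iff.mp (Finset.mem_range.mp hr)
        exact ⟨⟨(r, j'), mem_cells.mpr (hlow r hri)⟩,
          Finset.mem_filter.mpr ⟨Finset.mem_univ _, rfl, hri⟩, rfl⟩
    rw [this, Finset.card_range]
  have hRsmall : Rfin.filter (fun r => ¬ i ≤ r) = Finset.range i := by
    ext r
    simp only [Finset.mem_filter, Finset.mem_range, Finsupp.mem_support_iff, not_le, hRdef]
    constructor
    · rintro ⟨-, hri⟩; exact hri
    · intro hri
      have := hlow r (by omega)
      exact ⟨⟨by omega, by omega⟩, hri⟩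
  have hR : Rfin.card = RA.card + i := by
    have h1 : RA ∪ Rfin.filter (fun r => ¬ i ≤ r) = Rfin :=
      Finset.filter_union_filter_not_eq _ _
    have h2 : Disjoint RA (Rfin.filter (fun r => ¬ i ≤ r)) := by
      rw [Finset.disjoint_left]
      intro r hr hq
      exact (Finset.mem_filter.mp hq).2 (Finset.mem_filter.mp hr).2
    rw [← h1, Finset.card_union_of_disjoint h2, hRsmall, Finset.card_range]
  rw [hS, Finset.card_union_of_disjoint hdisj, hSA, hSB, hR]
  omega

end Garnir

end Pleth
namespace Pleth

section Garnir2

variable {B : Type*} {lam : ℕ →₀ ℕ} {i j j' : ℕ}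

lemma garnir_exists_pair (hlam : IsPartition lam) (hjj' : j < j')
    (hcell : ((i, j') : ℕ × ℕ) ∈ cells lam) (σ τ : Equiv.Perm (Cell lam))
    (hσ : ColPres lam σ) (hτ : ∀ p : Cell lam, ¬ snake lam i j j' p → τ p = p) :
    ∃ pq : Cell lam × Cell lam, snake lam i j j' pq.1 ∧ snake lam i j j' pq.2 ∧
      pq.1 ≠ pq.2 ∧ (σ (τ pq.1)).1.1 = (σ (τ pq.2)).1.1 := by
  classical
  have hmaps : ∀ p ∈ Finset.univ.filter (fun p : Cell lam => snake lam i j j' p),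
      (σ (τ p)).1.1 ∈ lam.support.filter (fun r => j < lam r) := by
    intro p hp
    have hsnp : snake lam i j j' p := (Finset.mem_filter.mp hp).2
    have hsntp : snake lam i j j' (τ p) := by
      by_contra h
      have h1 := hτ (τ p) h
      have h2 := τ.injective h1
      rw [h2] at h
      exact h hsnp
    have hcol : (σ (τ p)).1.2 = (τ p).1.2 := hσ (τ p)
    have hcells := mem_cells.mp (σ (τ p)).2
    have hjlt : j < lam ((σ (τ p)).1.1) := by
      rcases hsntp with ⟨hc, -⟩ | ⟨hc, -⟩ <;> rw [hcol, hc] at hcells <;> omega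
    exact Finset.mem_filter.mpr ⟨Finsupp.mem_support_iff.mpr (by omega), hjlt⟩
  obtain ⟨x, hx, y, hy, hxy, hfeq⟩ :=
    Finset.exists_ne_map_eq_of_card_lt_of_maps_to (snake_card hlam hjj' hcell) hmaps
  exact ⟨(x, y), (Finset.mem_filter.mp hx).2, (Finset.mem_filter.mp hy).2, hxy, hfeq⟩

end Garnir2

end Pleth
namespace Pleth

/-- Choice of a pair of distinct snake cells on which `φ` agrees (if one exists). -/
noncomputable def pickPair (lam : ℕ →₀ ℕ) (i j j' : ℕ) (φ : Cell lam → ℕ) (d : Cell lam) :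
    Cell lam × Cell lam :=
  if h : ∃ pq : Cell lam × Cell lam, snake lam i j j' pq.1 ∧ snake lam i j j' pq.2 ∧
      pq.1 ≠ pq.2 ∧ φ pq.1 = φ pq.2 then h.choose else (d, d)

lemma pickPair_spec {lam : ℕ →₀ ℕ} {i j j' : ℕ} {φ : Cell lam → ℕ} (d : Cell lam)
    (h : ∃ pq : Cell lam × Cell lam, snake lam i j j' pq.1 ∧ snake lam i j j' pq.2 ∧
      pq.1 ≠ pq.2 ∧ φ pq.1 = φ pq.2) :
    snake lam i j j' (pickPair lam i j j' φ d).1 ∧ snake lam i j j' (pickPair lam i j j' φ d).2 ∧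
      (pickPair lam i j j' φ d).1 ≠ (pickPair lam i j j' φ d).2 ∧
      φ (pickPair lam i j j' φ d).1 = φ (pickPair lam i j j' φ d).2 := by
  rw [pickPair, dif_pos h]
  exact h.choose_spec

lemma pickPair_neg {lam : ℕ →₀ ℕ} {i j j' : ℕ} {φ : Cell lam → ℕ} (d : Cell lam)
    (h : ¬ ∃ pq : Cell lam × Cell lam, snake lam i j j' pq.1 ∧ snake lam i j j' pq.2 ∧
      pq.1 ≠ pq.2 ∧ φ pq.1 = φ pq.2) :
    pickPair lam i j j' φ d = (d, d) := by
  rw [pickPair, dif_neg h]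

end Pleth

namespace Pleth

/-- **Lemma (Garnir / snake relation).**
Let `lam` be a partition.  With `0`-indexed rows and columns, let `j < j'` be columns and
let `i` be a row with `(i, j') ∈ [lam]` (this says exactly `1 ≤ j+1 < j'+1 ≤ λ_1` and
`1 ≤ i+1 ≤ λ'_{j'+1}` in the `1`-indexed notation of the paper).  Set
`A = {(i,j), (i+1,j), …} ∩ [lam]` (the cells of column `j` in rows `≥ i`) and
`B = {(0,j'), …, (i,j')}` (the cells of column `j'` in rows `≤ i`).  Then for every
`lam`-tableau `t` with entries from `B`,
`∑_τ sgn(τ) F(tτ) = 0`, the sum being over all permutations `τ` of `A ∪ B`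
(i.e. permutations of the cells fixing every cell outside `A ∪ B`). -/
theorem garnir_relation (K : Type*) [CommRing K] {B : Type*} (lam : ℕ →₀ ℕ)
    (hlam : IsPartition lam) (i j j' : ℕ) (hjj' : j < j')
    (hcell : ((i, j') : ℕ × ℕ) ∈ cells lam) (t : Tab lam B) :
    ∑ τ : Equiv.Perm (Cell lam),
      (if (∀ p : Cell lam, ¬((p.1.2 = j ∧ i ≤ p.1.1) ∨ (p.1.2 = j' ∧ p.1.1 ≤ i)) → τ p = p)
        then ((Equiv.Perm.sign τ : ℤ) • polytabloid K lam (permTab lam t τ))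
        else (0 : SymMod lam B K)) = 0 := by
  classical
  set d : Cell lam := ⟨(i, j'), hcell⟩ with hd
  set P := Equiv.Perm (Cell lam) with hP
  set Gfix : P → Prop := fun τ =>
    ∀ p : Cell lam, ¬((p.1.2 = j ∧ i ≤ p.1.1) ∨ (p.1.2 = j' ∧ p.1.1 ≤ i)) → τ p = p with hGfix
  set F : P × P → SymMod lam B K := fun q =>
    if (Gfix q.1 ∧ ColPres lam q.2)
      then (((Equiv.Perm.sign q.1 * Equiv.Perm.sign q.2 : ℤˣ) : ℤ) •
        tabloid K lam (permTab lam t (q.2 * q.1)))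
      else 0 with hF
  set Φ : P × P → Cell lam → ℕ := fun q p => ((q.2 * q.1) p).1.1 with hΦ
  set Qex : P × P → Prop := fun q =>
    ∃ pq : Cell lam × Cell lam, snake lam i j j' pq.1 ∧ snake lam i j j' pq.2 ∧
      pq.1 ≠ pq.2 ∧ Φ q pq.1 = Φ q pq.2 with hQex
  have key : ∀ τ : P,
      (if Gfix τ
        then ((Equiv.Perm.sign τ : ℤ) • polytabloid K lam (permTab lam t τ))
        else (0 : SymMod lam B K)) = ∑ σ : P, F (τ, σ) := by
    intro τ
    by_cases hτ : Gfix τ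
    · rw [if_pos hτ, polytabloid, Finset.smul_sum]
      refine Finset.sum_congr rfl fun σ _ => ?_
      by_cases hσ : ColPres lam σ
      · rw [if_pos hσ, hF]
        simp only
        rw [if_pos (⟨hτ, hσ⟩ : _ ∧ _), permTab_mul, smul_smul]
        norm_cast
      · rw [if_neg hσ, smul_zero, hF]
        simp only
        rw [if_neg (fun hc : _ ∧ _ => hσ hc.2)]
    · rw [if_neg hτ]
      symm
      apply Finset.sum_eq_zero
      intro σ _
      rw [hF]
      simp only
      rw [if_neg (fun hc : _ ∧ _ => hτ hc.1)]
  have step : (∑ τ : P,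
      (if Gfix τ
        then ((Equiv.Perm.sign τ : ℤ) • polytabloid K lam (permTab lam t τ))
        else (0 : SymMod lam B K))) = ∑ q : P × P, F q := by
    rw [← Finset.univ_product_univ, Finset.sum_product]
    exact Finset.sum_congr rfl fun τ _ => key τ
  rw [step]
  -- now the involution
  have swap_one : Equiv.swap d d = (1 : P) := by
    rw [Equiv.swap_self]; rfl
  -- facts under Qex
  have hΦg : ∀ q : P × P, Qex q →
      Φ (q.1 * Equiv.swap (pickPair lam i j j' (Φ q) d).1 (pickPair lam i j j' (Φ q) d).2, q.2)
        = Φ q := by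
    intro q hq
    obtain ⟨h1, h2, h3, h4⟩ := pickPair_spec (φ := Φ q) d hq
    funext p
    show Φ q (Equiv.swap (pickPair lam i j j' (Φ q) d).1 (pickPair lam i j j' (Φ q) d).2 p) = Φ q p
    rcases eq_or_ne p (pickPair lam i j j' (Φ q) d).1 with rfl | hp1
    · rw [Equiv.swap_apply_left]; exact h4.symm
    rcases eq_or_ne p (pickPair lam i j j' (Φ q) d).2 with rfl | hp2
    · rw [Equiv.swap_apply_right]; exact h4
    · rw [Equiv.swap_apply_of_ne_of_ne hp1 hp2]
  have hsfix : ∀ q : P × P, Qex q → ∀ p : Cell lam, ¬ snake lam i j j' p →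
      (Equiv.swap (pickPair lam i j j' (Φ q) d).1 (pickPair lam i j j' (Φ q) d).2) p = p := by
    intro q hq p hp
    obtain ⟨h1, h2, -, -⟩ := pickPair_spec (φ := Φ q) d hq
    exact Equiv.swap_apply_of_ne_of_ne (fun h => hp (h ▸ h1)) (fun h => hp (h ▸ h2))
  have hGiff : ∀ q : P × P, Qex q →
      (Gfix (q.1 * Equiv.swap (pickPair lam i j j' (Φ q) d).1 (pickPair lam i j j' (Φ q) d).2)
        ↔ Gfix q.1) := by
    intro q hq
    constructor <;> intro h p hp
    · have h5 := h p hp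
      rw [Equiv.Perm.mul_apply, hsfix q hq p hp] at h5
      exact h5
    · rw [Equiv.Perm.mul_apply, hsfix q hq p hp]
      exact h p hp
  have hQg : ∀ q : P × P, (Gfix q.1 ∧ ColPres lam q.2) → Qex q := by
    intro q hq
    exact garnir_exists_pair hlam hjj' hcell q.2 q.1 hq.2 hq.1
  refine Finset.sum_involution
    (fun q _ => (q.1 * Equiv.swap (pickPair lam i j j' (Φ q) d).1
      (pickPair lam i j j' (Φ q) d).2, q.2)) ?_ ?_ (fun q hq => Finset.mem_univ _) ?_
  · -- cancellation
    intro q hq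
    beta_reduce
    by_cases hQ : Qex q
    · obtain ⟨h1, h2, h3, h4⟩ := pickPair_spec (φ := Φ q) d hQ
      by_cases hc : Gfix q.1 ∧ ColPres lam q.2
      · have hc' : Gfix (q.1 * Equiv.swap (pickPair lam i j j' (Φ q) d).1
            (pickPair lam i j j' (Φ q) d).2) ∧ ColPres lam q.2 :=
          ⟨(hGiff q hQ).mpr hc.1, hc.2⟩
        rw [hF]
        simp only
        rw [if_pos hc, if_pos hc']
        -- tabloid equality
        have hmul : q.2 * (q.1 * Equiv.swap (pickPair lam i j j' (Φ q) d).1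
              (pickPair lam i j j' (Φ q) d).2)
            = Equiv.swap ((q.2 * q.1) (pickPair lam i j j' (Φ q) d).1)
                ((q.2 * q.1) (pickPair lam i j j' (Φ q) d).2) * (q.2 * q.1) := by
          rw [Equiv.swap_apply_apply]
          group
        have hrowpres : ∀ p : Cell lam,
            ((Equiv.swap ((q.2 * q.1) (pickPair lam i j j' (Φ q) d).1)
              ((q.2 * q.1) (pickPair lam i j j' (Φ q) d).2)) p).1.1 = p.1.1 := by
          intro p
          rcases eq_or_ne p ((q.2 * q.1) (pickPair lam i j j' (Φ q) d).1) with rfl | hp1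
          · rw [Equiv.swap_apply_left]; exact h4.symm
          rcases eq_or_ne p ((q.2 * q.1) (pickPair lam i j j' (Φ q) d).2) with rfl | hp2
          · rw [Equiv.swap_apply_right]; exact h4
          · rw [Equiv.swap_apply_of_ne_of_ne hp1 hp2]
        have htab : tabloid K lam (permTab lam t (q.2 * (q.1 *
              Equiv.swap (pickPair lam i j j' (Φ q) d).1 (pickPair lam i j j' (Φ q) d).2)))
            = tabloid K lam (permTab lam t (q.2 * q.1)) := by
          rw [hmul]
          exact tabloid_rowpres K lam t _ (q.2 * q.1) hrowpres
        have hsgn : Equiv.Perm.sign (q.1 * Equiv.swap (pickPair lam i j j' (Φ q) d).1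
              (pickPair lam i j j' (Φ q) d).2) * Equiv.Perm.sign q.2
            = -(Equiv.Perm.sign q.1 * Equiv.Perm.sign q.2) := by
          rw [map_mul, Equiv.Perm.sign_swap h3, mul_neg_one, neg_mul]
        rw [htab, hsgn, Units.val_neg, neg_smul]
        exact add_neg_cancel _
      · have hc' : ¬ (Gfix (q.1 * Equiv.swap (pickPair lam i j j' (Φ q) d).1
            (pickPair lam i j j' (Φ q) d).2) ∧ ColPres lam q.2) := by
          intro h
          exact hc ⟨(hGiff q hQ).mp h.1, h.2⟩
        rw [hF]
        simp only
        rw [if_neg hc, if_neg hc', add_zero]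
    · have hc : ¬ (Gfix q.1 ∧ ColPres lam q.2) := fun h => hQ (hQg q h)
      rw [pickPair_neg d hQ]
      simp only [swap_one, mul_one]
      rw [hF]
      simp only
      rw [if_neg hc, add_zero]
  · -- g_ne
    intro q hq hFq
    beta_reduce
    have hc : Gfix q.1 ∧ ColPres lam q.2 := by
      by_contra hc
      apply hFq
      rw [hF]; simp only; rw [if_neg hc]
    have hQ : Qex q := hQg q hc
    obtain ⟨-, -, h3, -⟩ := pickPair_spec (φ := Φ q) d hQ
    intro h
    have h5 := congrArg Prod.fst h
    simp only at h5
    have h6 : Equiv.swap (pickPair lam i j j' (Φ q) d).1 (pickPair lam i j j' (Φ q) d).2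
        = (1 : P) := by
      have := mul_left_cancel (h5.trans (mul_one q.1).symm)
      exact this
    have := Equiv.swap_eq_refl_iff.mp (by rw [h6]; rfl)
    exact h3 this
  · -- involution
    intro q hq
    beta_reduce
    by_cases hQ : Qex q
    · simp only
      rw [hΦg q hQ]
      ext : 1
      · simp only
        rw [mul_assoc, Equiv.swap_mul_self, mul_one]
      · rfl
    · simp only [pickPair_neg d hQ, swap_one, mul_one]
end Pleth
end

section
/- Let K be a commutative ring, B a totally ordered set, V a free K-module with basis indexed by B, and λ a partition. Then the set {F(s) : s a semistandard λ-tableau with entries from B} of GL-polytabloids is a K-basis for ∇^λ(V). -/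
open scoped Classical

namespace Pleth

section Aux
open Finset

variable {lam : ℕ →₀ ℕ} {B : Type*}

lemma cell_lt (p : Cell lam) : p.1.2 < lam p.1.1 := mem_cells.mp p.2

/-- Make a cell. -/
def mkCell (i j : ℕ) (h : j < lam i) : Cell lam := ⟨(i, j), mem_cells.mpr h⟩

lemma cell_ext {p q : Cell lam} (h1 : p.1.1 = q.1.1) (h2 : p.1.2 = q.1.2) : p = q := by
  apply Subtype.ext; exact Prod.ext h1 h2

lemma initial_segment {S : Finset ℕ} (h : ∀ a ∈ S, ∀ b ≤ a, b ∈ S) {j : ℕ} :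
    j ∈ S ↔ j < S.card := by
  constructor
  · intro hj
    have hsub : Finset.range (j+1) ⊆ S := fun b hb => h j hj b (by
      simpa using Nat.lt_succ_iff.mp (Finset.mem_range.mp hb))
    have := Finset.card_le_card hsub
    simpa [Finset.card_range] using this
  · intro hj
    by_contra hjS
    have hsub : S ⊆ Finset.range j := by
      intro a ha
      rw [Finset.mem_range]
      by_contra hle
      exact hjS (h a ha j (by omega))
    have := Finset.card_le_card hsub
    simp [Finset.card_range] at this
    omega

theorem Equiv.Perm.apply_inv_self {α : Type*} (f : Equiv.Perm α) (x : α) : f (f⁻¹ x) = x :=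
  (Equiv.eq_symm_apply f).mp rfl

theorem Equiv.Perm.inv_apply_self {α : Type*} (f : Equiv.Perm α) (x : α) : f⁻¹ (f x) = x :=
  Equiv.Perm.inv_eq_iff_eq.mpr rfl

lemma permTab_apply (t : Tab lam B) (σ : Equiv.Perm (Cell lam)) (p : Cell lam) :
    permTab lam t σ p = t (σ⁻¹ p) := rfl

lemma permTab_one (t : Tab lam B) : permTab lam t 1 = t := rfl

lemma permTab_permTab (t : Tab lam B) (a b : Equiv.Perm (Cell lam)) :
    permTab lam (permTab lam t a) b = permTab lam t (b * a) := by
  funext p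
  simp [permTab, Equiv.Perm.mul_apply]

lemma colPres_one : ColPres lam 1 := fun p => rfl

lemma colPres_mul {a b : Equiv.Perm (Cell lam)} (ha : ColPres lam a) (hb : ColPres lam b) :
    ColPres lam (a * b) := fun p => by
  rw [Equiv.Perm.mul_apply, ha (b p), hb p]

lemma colPres_inv {a : Equiv.Perm (Cell lam)} (ha : ColPres lam a) : ColPres lam a⁻¹ := by
  intro p
  conv_rhs => rw [← Equiv.Perm.apply_inv_self a p]
  rw [ha]

lemma colPres_swap {p q : Cell lam} (h : p.1.2 = q.1.2) : ColPres lam (Equiv.swap p q) := by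
  intro r
  rcases eq_or_ne r p with rfl | hrp
  · rw [Equiv.swap_apply_left]; exact h.symm
  rcases eq_or_ne r q with rfl | hrq
  · rw [Equiv.swap_apply_right]; exact h
  · rw [Equiv.swap_apply_of_ne_of_ne hrp hrq]

/-- `σ` preserves each row. -/
def RowPres (lam : ℕ →₀ ℕ) (σ : Equiv.Perm (Cell lam)) : Prop :=
  ∀ p : Cell lam, (σ p).1.1 = p.1.1

lemma rowPres_swap {p q : Cell lam} (h : p.1.1 = q.1.1) : RowPres lam (Equiv.swap p q) := by
  intro r
  rcases eq_or_ne r p with rfl | hrp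
  · rw [Equiv.swap_apply_left]; exact h.symm
  rcases eq_or_ne r q with rfl | hrq
  · rw [Equiv.swap_apply_right]; exact h
  · rw [Equiv.swap_apply_of_ne_of_ne hrp hrq]

/-- Cells in row `i`. -/
noncomputable def rowCells (lam : ℕ →₀ ℕ) (i : ℕ) : Finset (Cell lam) :=
  Finset.univ.filter (fun p => p.1.1 = i)

/-- Cells in column `j`. -/
noncomputable def colCells (lam : ℕ →₀ ℕ) (j : ℕ) : Finset (Cell lam) :=
  Finset.univ.filter (fun p => p.1.2 = j)

lemma rowData_val (t : Tab lam B) (i : ℕ) :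
    (rowData lam t i).1 = (rowCells lam i).val.map t := by
  classical
  have : rowCells lam i =
      (Finset.range (lam i)).attach.map
        ⟨fun j => (⟨(i, j.1), mem_cells.mpr (Finset.mem_range.mp j.2)⟩ : Cell lam),
         by intro a b hab; ext; simpa using congrArg (fun p : Cell lam => p.1.2) hab⟩ := by
    ext p
    simp only [rowCells, Finset.mem_filter, Finset.mem_univ, true_and, Finset.mem_map,
      Finset.mem_attach, Function.Embedding.coeFn_mk]
    constructor
    · intro hp
      refine ⟨⟨p.1.2, Finset.mem_range.mpr (hp ▸ cell_lt p)⟩, ?_⟩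
      exact (cell_ext (by exact hp) (by rfl)).symm
    · rintro ⟨j, rfl⟩; rfl
  rw [this, Finset.map_val, Multiset.map_map]
  rfl

lemma rowData_eq_iff {t u : Tab lam B} :
    rowData lam t = rowData lam u ↔
      ∀ i, (rowCells lam i).val.map t = (rowCells lam i).val.map u := by
  constructor
  · intro h i
    rw [← rowData_val, ← rowData_val, h]
  · intro h
    funext i
    exact Subtype.ext (by rw [rowData_val, rowData_val]; exact h i)

lemma rowData_permTab_rowPres (t : Tab lam B) {π : Equiv.Perm (Cell lam)}
    (hπ : RowPres lam π) : rowData lam (permTab lam t π) = rowData lam t := by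
  rw [rowData_eq_iff]
  intro i
  have hπ' : RowPres lam π⁻¹ := by
    intro p
    conv_rhs => rw [← Equiv.Perm.apply_inv_self π p]
    rw [hπ]
  have himg : Multiset.map (fun p => π⁻¹ p) (rowCells lam i).val = (rowCells lam i).val := by
    have : Finset.map π⁻¹.toEmbedding (rowCells lam i) = rowCells lam i := by
      ext p
      simp only [Finset.mem_map_equiv, rowCells, Finset.mem_filter, Finset.mem_univ, true_and]
      have hs : (Equiv.symm π⁻¹ : Equiv.Perm (Cell lam)) p = π p := rfl
      rw [hs]
      constructor
      · intro h; rw [← h, hπ p]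
      · intro h; rw [hπ p]; exact h
    conv_rhs => rw [← this]
    rw [Finset.map_val]
    rfl
  calc (rowCells lam i).val.map (permTab lam t π)
      = (Multiset.map (fun p => π⁻¹ p) (rowCells lam i).val).map t := by
        rw [Multiset.map_map]; rfl
    _ = (rowCells lam i).val.map t := by rw [himg]
end Aux
section Poly
open Finset

variable {K : Type*} [CommRing K] {B : Type*} [LinearOrder B] {lam : ℕ →₀ ℕ}

lemma colPres_mul_iff {σ τ : Equiv.Perm (Cell lam)} (hτ : ColPres lam τ) :
    ColPres lam (σ * τ) ↔ ColPres lam σ := by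
  constructor
  · intro h
    have := colPres_mul h (colPres_inv hτ)
    simpa [mul_assoc] using this
  · intro h; exact colPres_mul h hτ

lemma sign_sq (τ : Equiv.Perm (Cell lam)) :
    ((Equiv.Perm.sign τ : ℤ)) * ((Equiv.Perm.sign τ : ℤ)) = 1 := by
  rcases Int.units_eq_one_or (Equiv.Perm.sign τ) with h | h <;> rw [h] <;> rfl

set_option maxHeartbeats 1000000 in
lemma polytabloid_permTab (t : Tab lam B) {τ : Equiv.Perm (Cell lam)} (hτ : ColPres lam τ) :
    polytabloid K lam (permTab lam t τ) = (Equiv.Perm.sign τ : ℤ) • polytabloid K lam t := by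
  unfold polytabloid
  rw [Finset.smul_sum]
  have step : ∀ σ : Equiv.Perm (Cell lam),
      (if ColPres lam σ then ((Equiv.Perm.sign σ : ℤ) •
          tabloid K lam (permTab lam (permTab lam t τ) σ)) else 0)
      = (Equiv.Perm.sign τ : ℤ) • (if ColPres lam (σ * τ) then ((Equiv.Perm.sign (σ * τ) : ℤ) •
          tabloid K lam (permTab lam t (σ * τ))) else 0) := by
    intro σ
    rw [permTab_permTab]
    by_cases h : ColPres lam σ
    · rw [if_pos h, if_pos ((colPres_mul_iff hτ).mpr h), smul_smul]
      congr 1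
      rw [Equiv.Perm.sign_mul, Units.val_mul, ← mul_assoc, mul_comm ((Equiv.Perm.sign τ : ℤ)),
        mul_assoc, sign_sq, mul_one]
    · rw [if_neg h, if_neg (fun hc => h ((colPres_mul_iff hτ).mp hc)), smul_zero]
  calc ∑ σ : Equiv.Perm (Cell lam), (if ColPres lam σ then ((Equiv.Perm.sign σ : ℤ) •
          tabloid K lam (permTab lam (permTab lam t τ) σ)) else 0)
      = ∑ σ : Equiv.Perm (Cell lam), (fun ρ => (Equiv.Perm.sign τ : ℤ) •
          (if ColPres lam ρ then ((Equiv.Perm.sign ρ : ℤ) •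
          tabloid K lam (permTab lam t ρ)) else 0)) ((Equiv.mulRight τ) σ) :=
        Finset.sum_congr rfl (fun σ _ => step σ)
    _ = _ := Equiv.sum_comp (Equiv.mulRight τ)
      (fun ρ => (Equiv.Perm.sign τ : ℤ) • (if ColPres lam ρ then ((Equiv.Perm.sign ρ : ℤ) •
          tabloid K lam (permTab lam t ρ)) else 0))

lemma permTab_swap_eq {t : Tab lam B} {p q : Cell lam} (hval : t p = t q) :
    permTab lam t (Equiv.swap p q) = t := by
  funext r
  rw [permTab_apply]
  rcases eq_or_ne r p with rfl | hrp
  · rw [Equiv.swap_inv, Equiv.swap_apply_left, ← hval]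
  rcases eq_or_ne r q with rfl | hrq
  · rw [Equiv.swap_inv, Equiv.swap_apply_right, hval]
  · rw [Equiv.swap_inv, Equiv.swap_apply_of_ne_of_ne hrp hrq]

lemma polytabloid_eq_zero_of_col_repeat {t : Tab lam B} {p q : Cell lam} (hne : p ≠ q)
    (hcol : p.1.2 = q.1.2) (hval : t p = t q) : polytabloid ℤ lam t = 0 := by
  have h2 := polytabloid_permTab (K := ℤ) t (colPres_swap hcol)
  rw [permTab_swap_eq hval, Equiv.Perm.sign_swap hne] at h2
  have h3 : polytabloid ℤ lam t + polytabloid ℤ lam t = 0 := by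
    nth_rewrite 1 [h2]
    simp
  ext r
  have h4 := DFunLike.congr_fun h3 r
  rw [Finsupp.add_apply, Finsupp.zero_apply] at h4
  rw [Finsupp.zero_apply]
  omega

lemma mapRange_polytabloid (t : Tab lam B) :
    (Finsupp.mapRange.addMonoidHom (Int.castAddHom K)) (polytabloid ℤ lam t)
      = polytabloid K lam t := by
  unfold polytabloid
  rw [map_sum]
  apply Finset.sum_congr rfl
  intro σ _
  by_cases h : ColPres lam σ
  · rw [if_pos h, if_pos h, map_zsmul]
    congr 1
    unfold tabloid
    rw [Finsupp.mapRange.addMonoidHom_apply, Finsupp.mapRange_single]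
    norm_num
  · rw [if_neg h, if_neg h, map_zero]

end Poly
section Counting
open Finset

variable {B : Type*} [LinearOrder B] {lam : ℕ →₀ ℕ}

/-- Number of cells in rows `< k` with entry `≤ b`. -/
noncomputable def NLe (lam : ℕ →₀ ℕ) {B : Type*} [LinearOrder B] (t : Tab lam B) (b : B)
    (k : ℕ) : ℕ :=
  (Finset.univ.filter (fun p : Cell lam => p.1.1 < k ∧ t p ≤ b)).card

/-- Number of cells in column `j`, rows `< k`, with entry `≤ b`. -/
noncomputable def colCountLe (lam : ℕ →₀ ℕ) {B : Type*} [LinearOrder B] (t : Tab lam B) (b : B)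
    (j k : ℕ) : ℕ :=
  (Finset.univ.filter (fun p : Cell lam => p.1.2 = j ∧ p.1.1 < k ∧ t p ≤ b)).card

/-- Strict upper bound for column indices. -/
noncomputable def Mcol (lam : ℕ →₀ ℕ) : ℕ := lam.support.sup lam

lemma col_lt_Mcol (p : Cell lam) : p.1.2 < Mcol lam := by
  have h := cell_lt p
  have : lam p.1.1 ≤ Mcol lam :=
    Finset.le_sup (Finsupp.mem_support_iff.mpr (by omega))
  omega

lemma NLe_eq_sum_rows (t : Tab lam B) (b : B) (k : ℕ) :
    NLe lam t b k = ∑ i ∈ Finset.range k,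
      Multiset.countP (fun e => e ≤ b) (rowData lam t i).1 := by
  classical
  unfold NLe
  rw [Finset.card_eq_sum_card_fiberwise
    (f := fun p : Cell lam => p.1.1) (t := Finset.range k)
    (fun p hp => Finset.mem_range.mpr (Finset.mem_filter.mp hp).2.1)]
  apply Finset.sum_congr rfl
  intro i hi
  have hik := Finset.mem_range.mp hi
  have hset : (Finset.univ.filter (fun p : Cell lam => p.1.1 < k ∧ t p ≤ b)).filter
      (fun p => p.1.1 = i) = (rowCells lam i).filter (fun p => t p ≤ b) := by
    ext p
    simp only [Finset.mem_filter, Finset.mem_univ, true_and, rowCells]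
    constructor
    · rintro ⟨⟨h1, h2⟩, h3⟩; exact ⟨h3, h2⟩
    · rintro ⟨h1, h2⟩; exact ⟨⟨by omega, h2⟩, h1⟩
  rw [hset, rowData_val, Multiset.countP_map]
  rw [Finset.card_def, Finset.filter_val]

lemma NLe_eq_sum_cols (t : Tab lam B) (b : B) (k : ℕ) :
    NLe lam t b k = ∑ j ∈ Finset.range (Mcol lam), colCountLe lam t b j k := by
  classical
  unfold NLe colCountLe
  rw [Finset.card_eq_sum_card_fiberwise
    (f := fun p : Cell lam => p.1.2) (t := Finset.range (Mcol lam))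
    (fun p _ => Finset.mem_range.mpr (col_lt_Mcol p))]
  apply Finset.sum_congr rfl
  intro j _
  congr 1
  ext p
  simp only [Finset.mem_filter, Finset.mem_univ, true_and]
  tauto

lemma colCountLe_succ (t : Tab lam B) (b : B) (j r : ℕ) :
    colCountLe lam t b j (r + 1) = colCountLe lam t b j r +
      (Finset.univ.filter (fun p : Cell lam => p.1.2 = j ∧ p.1.1 = r ∧ t p ≤ b)).card := by
  classical
  unfold colCountLe
  rw [← Finset.card_union_of_disjoint]
  · congr 1
    ext p
    simp only [Finset.mem_union, Finset.mem_filter, Finset.mem_univ, true_and]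
    constructor
    · rintro ⟨h1, h2, h3⟩
      rcases Nat.lt_or_ge p.1.1 r with h | h
      · exact Or.inl ⟨h1, h, h3⟩
      · exact Or.inr ⟨h1, by omega, h3⟩
    · rintro (⟨h1, h2, h3⟩ | ⟨h1, h2, h3⟩) <;> exact ⟨h1, by omega, h3⟩
  · rw [Finset.disjoint_filter]
    rintro p _ ⟨h1, h2, h3⟩ ⟨g1, g2, g3⟩
    omega

lemma cell_filter_eq (t : Tab lam B) (b : B) (q : Cell lam) :
    (Finset.univ.filter (fun p : Cell lam => p.1.2 = q.1.2 ∧ p.1.1 = q.1.1 ∧ t p ≤ b)).card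
      = if t q ≤ b then 1 else 0 := by
  classical
  by_cases h : t q ≤ b
  · rw [if_pos h]
    rw [Finset.card_eq_one]
    refine ⟨q, ?_⟩
    ext p
    simp only [Finset.mem_filter, Finset.mem_univ, true_and, Finset.mem_singleton]
    constructor
    · rintro ⟨h1, h2, h3⟩; exact cell_ext h2 h1
    · rintro rfl; exact ⟨rfl, rfl, h⟩
  · rw [if_neg h, Finset.card_eq_zero]
    ext p
    simp only [Finset.mem_filter, Finset.mem_univ, true_and, Finset.notMem_empty,
      iff_false, not_and]
    intro h1 h2
    rw [cell_ext h2 h1]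
    exact h

/-- Top-closed subsets of a column are nested. -/
lemma topclosed_nested {S T : Finset (Cell lam)} {j : ℕ}
    (hSj : ∀ p ∈ S, p.1.2 = j) (hTj : ∀ p ∈ T, p.1.2 = j)
    (hS : ∀ p q : Cell lam, p.1.2 = q.1.2 → q ∈ S → p.1.1 ≤ q.1.1 → p ∈ S)
    (hT : ∀ p q : Cell lam, p.1.2 = q.1.2 → q ∈ T → p.1.1 ≤ q.1.1 → p ∈ T) :
    S ⊆ T ∨ T ⊆ S := by
  by_contra hc
  push_neg at hc
  rcases Finset.not_subset.mp hc.1 with ⟨p1, hp1S, hp1T⟩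
  rcases Finset.not_subset.mp hc.2 with ⟨p2, hp2T, hp2S⟩
  rcases le_or_gt p1.1.1 p2.1.1 with h | h
  · exact hp1T (hT p1 p2 (by rw [hSj p1 hp1S, hTj p2 hp2T]) hp2T h)
  · exact hp2S (hS p2 p1 (by rw [hSj p1 hp1S, hTj p2 hp2T]) hp1S (by omega))

lemma colCountLe_permTab_le {s : Tab lam B}
    (hcs : ∀ p q : Cell lam, p.1.2 = q.1.2 → p.1.1 < q.1.1 → s p < s q)
    {σ : Equiv.Perm (Cell lam)} (hσ : ColPres lam σ) (b : B) (k j : ℕ) :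
    colCountLe lam (permTab lam s σ) b j k ≤ colCountLe lam s b j k := by
  classical
  set L' : Finset (Cell lam) :=
    Finset.univ.filter (fun p => p.1.2 = j ∧ (σ p).1.1 < k ∧ s p ≤ b) with hL'
  set Ks : Finset (Cell lam) := Finset.univ.filter (fun p => p.1.2 = j ∧ p.1.1 < k) with hKs
  set Ts : Finset (Cell lam) := Finset.univ.filter (fun p => p.1.2 = j ∧ s p ≤ b) with hTs
  have himg : Finset.univ.filter
      (fun p : Cell lam => p.1.2 = j ∧ p.1.1 < k ∧ permTab lam s σ p ≤ b) = L'.image σ := by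
    ext p
    simp only [hL', Finset.mem_image, Finset.mem_filter, Finset.mem_univ, true_and]
    constructor
    · rintro ⟨h1, h2, h3⟩
      exact ⟨σ⁻¹ p, ⟨by rw [colPres_inv hσ p, h1],
        by rw [Equiv.Perm.apply_inv_self]; exact h2, h3⟩, by rw [Equiv.Perm.apply_inv_self]⟩
    · rintro ⟨q, ⟨h1, h2, h3⟩, rfl⟩
      refine ⟨by rw [hσ q, h1], h2, ?_⟩
      rw [permTab_apply, Equiv.Perm.inv_apply_self]
      exact h3
  have hcard : colCountLe lam (permTab lam s σ) b j k = L'.card := by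
    unfold colCountLe
    rw [himg, Finset.card_image_of_injective _ σ.injective]
  rw [hcard]
  have hRset : Finset.univ.filter (fun p : Cell lam => p.1.2 = j ∧ p.1.1 < k ∧ s p ≤ b)
      = Ks ∩ Ts := by
    ext p
    simp only [hKs, hTs, Finset.mem_inter, Finset.mem_filter, Finset.mem_univ, true_and]
    tauto
  have hLK : L'.card ≤ Ks.card := by
    apply Finset.card_le_card_of_injOn σ
    · intro p hp
      simp only [hL', Finset.mem_coe, Finset.mem_filter, Finset.mem_univ, true_and] at hp
      simp only [hKs, Finset.mem_coe, Finset.mem_filter, Finset.mem_univ, true_and]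
      exact ⟨by rw [hσ p, hp.1], hp.2.1⟩
    · exact fun a _ b _ h => σ.injective h
  have hLT : L'.card ≤ Ts.card := by
    apply Finset.card_le_card
    intro p hp
    simp only [hL', Finset.mem_filter, Finset.mem_univ, true_and] at hp
    simp only [hTs, Finset.mem_filter, Finset.mem_univ, true_and]
    exact ⟨hp.1, hp.2.2⟩
  have hnest : Ks ⊆ Ts ∨ Ts ⊆ Ks := by
    apply topclosed_nested (j := j)
    · intro p hp; exact (Finset.mem_filter.mp hp).2.1
    · intro p hp; exact (Finset.mem_filter.mp hp).2.1
    · intro p q hpq hq hle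
      simp only [hKs, Finset.mem_filter, Finset.mem_univ, true_and] at hq ⊢
      exact ⟨by rw [hpq, hq.1], by omega⟩
    · intro p q hpq hq hle
      simp only [hTs, Finset.mem_filter, Finset.mem_univ, true_and] at hq ⊢
      refine ⟨by rw [hpq, hq.1], ?_⟩
      rcases eq_or_ne p q with rfl | hne
      · exact hq.2
      · have : p.1.1 < q.1.1 ∨ p = q := by
          rcases Nat.lt_or_ge p.1.1 q.1.1 with h | h
          · exact Or.inl h
          · exact Or.inr (cell_ext (by omega) hpq)
        rcases this with h | rfl
        · exact le_of_lt (lt_of_lt_of_le (hcs p q hpq h) hq.2)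
        · exact hq.2
  unfold colCountLe
  rw [hRset]
  rcases hnest with h | h
  · rw [Finset.inter_eq_left.mpr h]; exact hLK
  · rw [Finset.inter_eq_right.mpr h]; exact hLT

end Counting
section EqCase
open Finset

variable {B : Type*} [LinearOrder B] {lam : ℕ →₀ ℕ}

lemma NLe_congr {t u : Tab lam B} (h : rowData lam t = rowData lam u) (b : B) (k : ℕ) :
    NLe lam t b k = NLe lam u b k := by
  rw [NLe_eq_sum_rows, NLe_eq_sum_rows, h]

/-- Strict upper bound for row indices plus one. -/
noncomputable def Rrow (lam : ℕ →₀ ℕ) : ℕ := (lam.support.sup id) + 2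

lemma row_succ_lt_Rrow (p : Cell lam) : p.1.1 + 1 < Rrow lam := by
  have h := cell_lt p
  have : p.1.1 ≤ lam.support.sup id :=
    Finset.le_sup (f := id) (Finsupp.mem_support_iff.mpr (by omega))
  unfold Rrow
  omega

lemma permTab_eq_of_NLe_eq {s : Tab lam B}
    (hcs : ∀ p q : Cell lam, p.1.2 = q.1.2 → p.1.1 < q.1.1 → s p < s q)
    {σ : Equiv.Perm (Cell lam)} (hσ : ColPres lam σ) (E : Finset B)
    (hE : ∀ p : Cell lam, s p ∈ E)
    (h : ∀ b ∈ E, ∀ k, k < Rrow lam → NLe lam (permTab lam s σ) b k = NLe lam s b k) :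
    permTab lam s σ = s := by
  classical
  have hcol : ∀ b ∈ E, ∀ k, k < Rrow lam → ∀ j ∈ Finset.range (Mcol lam),
      colCountLe lam (permTab lam s σ) b j k = colCountLe lam s b j k := by
    intro b hb k hk
    have hsum : ∑ j ∈ Finset.range (Mcol lam), colCountLe lam (permTab lam s σ) b j k
        = ∑ j ∈ Finset.range (Mcol lam), colCountLe lam s b j k := by
      rw [← NLe_eq_sum_cols, ← NLe_eq_sum_cols, h b hb k hk]
    exact (Finset.sum_eq_sum_iff_of_le
      (fun j _ => colCountLe_permTab_le hcs hσ b k j)).mp hsum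
  funext q
  have key : ∀ b ∈ E, ((if permTab lam s σ q ≤ b then 1 else 0) : ℕ)
      = if s q ≤ b then 1 else 0 := by
    intro b hb
    have h1 := hcol b hb (q.1.1+1) (row_succ_lt_Rrow q) q.1.2
      (Finset.mem_range.mpr (col_lt_Mcol q))
    have h2 := hcol b hb q.1.1 (by have := row_succ_lt_Rrow q; omega) q.1.2
      (Finset.mem_range.mpr (col_lt_Mcol q))
    have e1 := colCountLe_succ (permTab lam s σ) b q.1.2 q.1.1
    have e2 := colCountLe_succ s b q.1.2 q.1.1
    rw [cell_filter_eq] at e1 e2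
    omega
  have hb1 : s q ∈ E := hE q
  have hb2 : permTab lam s σ q ∈ E := hE (σ⁻¹ q)
  have k1 := key _ hb2
  have k2 := key _ hb1
  rw [if_pos (le_refl _)] at k2
  rw [if_pos (le_refl (permTab lam s σ q))] at k1
  have l1 : permTab lam s σ q ≤ s q := by
    by_contra hcon
    rw [if_neg hcon] at k2
    omega
  have l2 : s q ≤ permTab lam s σ q := by
    by_contra hcon
    rw [if_neg hcon] at k1
    omega
  exact le_antisymm l1 l2

lemma semistd_row_le_iff {s : Tab lam B} (hs : RowsWeak lam (· ≤ ·) s) (q : Cell lam) (b : B) :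
    s q ≤ b ↔ q.1.2 < Multiset.countP (fun e => e ≤ b) (rowData lam s q.1.1).1 := by
  classical
  set i := q.1.1 with hi
  set Sb := (rowCells lam i).filter (fun p => s p ≤ b) with hSb
  have hcnt : Multiset.countP (fun e => e ≤ b) (rowData lam s i).1 = Sb.card := by
    rw [rowData_val, Multiset.countP_map, hSb, Finset.card_def, Finset.filter_val]
  set C := Finset.image (fun p : Cell lam => p.1.2) Sb with hC
  have hrowSb : ∀ p ∈ Sb, p.1.1 = i := by
    intro p hp
    rw [hSb, Finset.mem_filter] at hp
    exact (Finset.mem_filter.mp hp.1).2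
  have hCcard : C.card = Sb.card := by
    rw [hC]
    apply Finset.card_image_of_injOn
    intro p hp p' hp' hpp
    exact cell_ext (by rw [hrowSb p hp, hrowSb p' hp']) hpp
  have hdc : ∀ a ∈ C, ∀ c ≤ a, c ∈ C := by
    intro a ha c hca
    rw [hC, Finset.mem_image] at ha
    obtain ⟨p, hp, rfl⟩ := ha
    have hpS := Finset.mem_filter.mp hp
    have hprow := hrowSb p hp
    have hcell : c < lam i := by
      have h2 := cell_lt p
      rw [hprow] at h2
      omega
    set pc : Cell lam := ⟨(i, c), mem_cells.mpr hcell⟩ with hpc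
    rw [hC, Finset.mem_image]
    refine ⟨pc, ?_, rfl⟩
    rw [hSb, Finset.mem_filter]
    constructor
    · rw [rowCells, Finset.mem_filter]
      exact ⟨Finset.mem_univ _, rfl⟩
    · exact le_trans (hs pc p (by rw [hprow]) (by exact hca)) hpS.2
  have hmem : q.1.2 ∈ C ↔ s q ≤ b := by
    constructor
    · intro hq
      rw [hC, Finset.mem_image] at hq
      obtain ⟨p, hp, hpq⟩ := hq
      have : p = q := cell_ext (by rw [hrowSb p hp]) hpq
      rw [← this]
      exact (Finset.mem_filter.mp hp).2
    · intro hq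
      rw [hC, Finset.mem_image]
      refine ⟨q, ?_, rfl⟩
      rw [hSb, Finset.mem_filter]
      exact ⟨by rw [rowCells, Finset.mem_filter]; exact ⟨Finset.mem_univ _, rfl⟩, hq⟩
  rw [hcnt, ← hCcard, ← hmem]
  exact initial_segment hdc

lemma ssyt_rowData_inj {s t : Tab lam B} (hs : IsSemistd lam s) (ht : IsSemistd lam t)
    (h : rowData lam s = rowData lam t) : s = t := by
  funext q
  have hb : ∀ b : B, s q ≤ b ↔ t q ≤ b := by
    intro b
    rw [semistd_row_le_iff hs.1 q b, semistd_row_le_iff ht.1 q b, h]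
  exact le_antisymm ((hb (t q)).mpr (le_refl _)) ((hb (s q)).mp (le_refl _))

end EqCase
section Indep
open Finset

variable {K : Type*} [CommRing K] {B : Type*} [LinearOrder B] {lam : ℕ →₀ ℕ}

lemma NLe_permTab_le {s : Tab lam B}
    (hcs : ∀ p q : Cell lam, p.1.2 = q.1.2 → p.1.1 < q.1.1 → s p < s q)
    {σ : Equiv.Perm (Cell lam)} (hσ : ColPres lam σ) (b : B) (k : ℕ) :
    NLe lam (permTab lam s σ) b k ≤ NLe lam s b k := by
  rw [NLe_eq_sum_cols, NLe_eq_sum_cols]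
  exact Finset.sum_le_sum (fun j _ => colCountLe_permTab_le hcs hσ b k j)

lemma colPres_fix_eq_one {s : Tab lam B}
    (hcs : ∀ p q : Cell lam, p.1.2 = q.1.2 → p.1.1 < q.1.1 → s p < s q)
    {σ : Equiv.Perm (Cell lam)} (hσ : ColPres lam σ)
    (hfix : permTab lam s σ = s) : σ = 1 := by
  apply Equiv.ext
  intro p
  rw [Equiv.Perm.one_apply]
  by_contra hnep
  have hval : s p = s (σ p) := by
    have := congrFun hfix (σ p)
    rw [permTab_apply, Equiv.Perm.inv_apply_self] at this
    exact this
  have hcol : (σ p).1.2 = p.1.2 := hσ p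
  rcases lt_trichotomy (σ p).1.1 p.1.1 with h | h | h
  · exact absurd (hcs (σ p) p hcol h) (by rw [← hval]; exact lt_irrefl _)
  · exact hnep (cell_ext h hcol)
  · exact absurd (hcs p (σ p) hcol.symm h) (by rw [← hval]; exact lt_irrefl _)

lemma polytabloid_coeff (t : Tab lam B) (ρ : RowData lam B) :
    (polytabloid K lam t) ρ =
      ∑ σ : Equiv.Perm (Cell lam),
        (if ColPres lam σ ∧ rowData lam (permTab lam t σ) = ρ
          then ((Equiv.Perm.sign σ : ℤ) : K) else 0) := by
  classical
  unfold polytabloid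
  rw [Finsupp.finset_sum_apply]
  apply Finset.sum_congr rfl
  intro σ _
  by_cases h : ColPres lam σ
  · rw [if_pos h]
    unfold tabloid
    rw [Finsupp.smul_apply, Finsupp.single_apply]
    by_cases h2 : rowData lam (permTab lam t σ) = ρ
    · rw [if_pos h2, if_pos ⟨h, h2⟩, zsmul_eq_mul, mul_one]
    · rw [if_neg h2, if_neg (fun hc => h2 hc.2), smul_zero]
  · rw [if_neg h, if_neg (fun hc => h hc.1), Finsupp.zero_apply]

theorem ssyt_linearIndependent :
    LinearIndependent K (fun s : SSYT lam B => polytabloid K lam s.1) := by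
  classical
  rw [linearIndependent_iff]
  intro l hl
  by_contra hne
  have hsupp : l.support.Nonempty := Finsupp.support_nonempty_iff.mpr hne
  set E : Finset B := l.support.biUnion (fun s => Finset.image s.1 Finset.univ) with hE
  have hEmem : ∀ s ∈ l.support, ∀ p : Cell lam, s.1 p ∈ E := by
    intro s hs p
    rw [hE]
    exact Finset.mem_biUnion.mpr ⟨s, hs, Finset.mem_image_of_mem _ (Finset.mem_univ p)⟩
  set D : SSYT lam B → ℕ :=
    fun s => ∑ q ∈ E ×ˢ Finset.range (Rrow lam), NLe lam s.1 q.1 q.2 with hD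
  obtain ⟨s₀, hs₀supp, hs₀max⟩ := Finset.exists_max_image l.support D hsupp
  have key : ∀ s ∈ l.support,
      (polytabloid K lam s.1) (rowData lam s₀.1) = if s = s₀ then 1 else 0 := by
    intro s hs
    rw [polytabloid_coeff]
    by_cases hss : s = s₀
    · subst hss
      rw [if_pos rfl]
      rw [Finset.sum_eq_single 1]
      · rw [if_pos ⟨colPres_one, by rw [permTab_one]⟩]
        simp
      · intro σ _ hσne
        by_cases hc : ColPres lam σ ∧ rowData lam (permTab lam s.1 σ) = rowData lam s.1
        · exfalso
          apply hσne
          apply colPres_fix_eq_one (fun p q h1 h2 => s.2.2 p q h1 h2) hc.1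
          apply permTab_eq_of_NLe_eq (fun p q h1 h2 => s.2.2 p q h1 h2) hc.1
            (Finset.image s.1 Finset.univ)
            (fun p => Finset.mem_image_of_mem _ (Finset.mem_univ p))
          intro b _ k _
          exact NLe_congr hc.2 b k
        · rw [if_neg hc]
      · intro h1
        exact absurd (Finset.mem_univ 1) h1
    · rw [if_neg hss]
      apply Finset.sum_eq_zero
      intro σ _
      rw [if_neg]
      rintro ⟨hcp, hrd⟩
      apply hss
      -- show s = s₀
      have hNeq : ∀ b k, NLe lam (permTab lam s.1 σ) b k = NLe lam s₀.1 b k :=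
        fun b k => NLe_congr hrd b k
      have hDs : D s₀ ≤ D s := by
        rw [hD]
        apply Finset.sum_le_sum
        intro q _
        rw [← hNeq q.1 q.2]
        exact NLe_permTab_le (fun p r h1 h2 => s.2.2 p r h1 h2) hcp q.1 q.2
      have hDeq : ∀ q ∈ E ×ˢ Finset.range (Rrow lam),
          NLe lam (permTab lam s.1 σ) q.1 q.2 = NLe lam s.1 q.1 q.2 := by
        have hsum : ∑ q ∈ E ×ˢ Finset.range (Rrow lam), NLe lam (permTab lam s.1 σ) q.1 q.2
            = ∑ q ∈ E ×ˢ Finset.range (Rrow lam), NLe lam s.1 q.1 q.2 := by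
          have h1 : ∑ q ∈ E ×ˢ Finset.range (Rrow lam), NLe lam (permTab lam s.1 σ) q.1 q.2
              = D s₀ := by
            rw [hD]
            exact Finset.sum_congr rfl (fun q _ => hNeq q.1 q.2)
          rw [h1]
          show D s₀ = D s
          exact le_antisymm hDs (hs₀max s hs)
        exact (Finset.sum_eq_sum_iff_of_le (fun q _ =>
          NLe_permTab_le (fun p r h1 h2 => s.2.2 p r h1 h2) hcp q.1 q.2)).mp hsum
      have hperm : permTab lam s.1 σ = s.1 := by
        apply permTab_eq_of_NLe_eq (fun p r h1 h2 => s.2.2 p r h1 h2) hcp E (hEmem s hs)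
        intro b hb k hk
        exact hDeq (b, k) (Finset.mem_product.mpr ⟨hb, Finset.mem_range.mpr hk⟩)
      apply Subtype.ext
      apply ssyt_rowData_inj s.2 s₀.2
      rw [← hperm]
      exact hrd
  have hcoeff : (Finsupp.linearCombination K
      (fun s : SSYT lam B => polytabloid K lam s.1) l) (rowData lam s₀.1) = l s₀ := by
    rw [Finsupp.linearCombination_apply, Finsupp.sum, Finsupp.finset_sum_apply]
    have hterm : ∀ s ∈ l.support,
        (l s • polytabloid K lam s.1) (rowData lam s₀.1) = if s = s₀ then l s₀ else 0 := by
      intro s hs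
      rw [Finsupp.smul_apply, key s hs, smul_eq_mul]
      by_cases h : s = s₀
      · subst h; rw [if_pos rfl, if_pos rfl, mul_one]
      · rw [if_neg h, if_neg h, mul_zero]
    rw [Finset.sum_congr rfl hterm, Finset.sum_ite_eq' l.support s₀ (fun _ => l s₀),
      if_pos hs₀supp]
  rw [hl, Finsupp.zero_apply] at hcoeff
  exact (Finsupp.mem_support_iff.mp hs₀supp) hcoeff.symm

end Indep
section Garnir
open Finset

variable {K : Type*} [CommRing K] {B : Type*} [LinearOrder B] {lam : ℕ →₀ ℕ}

/-- Permutations supported on `X`. -/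
noncomputable def SXf (lam : ℕ →₀ ℕ) (X : Finset (Cell lam)) :
    Finset (Equiv.Perm (Cell lam)) :=
  Finset.univ.filter (fun σ => ∀ p ∉ X, σ p = p)

lemma mem_SXf {X : Finset (Cell lam)} {σ : Equiv.Perm (Cell lam)} :
    σ ∈ SXf lam X ↔ ∀ p ∉ X, σ p = p := by
  unfold SXf; simp

lemma SXf_one {X : Finset (Cell lam)} : (1 : Equiv.Perm (Cell lam)) ∈ SXf lam X :=
  mem_SXf.mpr (fun _ _ => rfl)

lemma SXf_mul {X : Finset (Cell lam)} {σ τ : Equiv.Perm (Cell lam)}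
    (hσ : σ ∈ SXf lam X) (hτ : τ ∈ SXf lam X) : σ * τ ∈ SXf lam X := by
  rw [mem_SXf] at *
  intro p hp
  rw [Equiv.Perm.mul_apply, hτ p hp, hσ p hp]

lemma SXf_inv {X : Finset (Cell lam)} {σ : Equiv.Perm (Cell lam)}
    (hσ : σ ∈ SXf lam X) : σ⁻¹ ∈ SXf lam X := by
  rw [mem_SXf] at *
  intro p hp
  conv_lhs => rw [← hσ p hp]
  rw [Equiv.Perm.inv_apply_self]

lemma SXf_maps {X : Finset (Cell lam)} {σ : Equiv.Perm (Cell lam)}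
    (hσ : σ ∈ SXf lam X) {p : Cell lam} (hp : p ∈ X) : σ p ∈ X := by
  by_contra hc
  have := mem_SXf.mp hσ _ hc
  have : σ p = p := σ.injective this
  rw [this] at hc
  exact hc hp

/-- The subgroup of column-preserving permutations supported on `X`. -/
noncomputable def GarH (lam : ℕ →₀ ℕ) (X : Finset (Cell lam)) :
    Subgroup (Equiv.Perm (Cell lam)) where
  carrier := {ρ | (∀ p ∉ X, ρ p = p) ∧ ColPres lam ρ}
  mul_mem' := by
    rintro a b ⟨ha1, ha2⟩ ⟨hb1, hb2⟩
    exact ⟨fun p hp => mem_SXf.mp (SXf_mul (mem_SXf.mpr ha1) (mem_SXf.mpr hb1)) p hp,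
      colPres_mul ha2 hb2⟩
  one_mem' := ⟨fun _ _ => rfl, colPres_one⟩
  inv_mem' := by
    rintro a ⟨ha1, ha2⟩
    exact ⟨fun p hp => mem_SXf.mp (SXf_inv (mem_SXf.mpr ha1)) p hp, colPres_inv ha2⟩

lemma garnir_samerow {X : Finset (Cell lam)} {j : ℕ}
    (hX : ∀ p ∈ X, j ≤ p.1.2) (hcard : (colCells lam j).card < X.card)
    (τ : Equiv.Perm (Cell lam)) (hτ : ColPres lam τ) :
    ∃ p q : Cell lam, p ∈ X ∧ q ∈ X ∧ p ≠ q ∧ (τ p).1.1 = (τ q).1.1 := by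
  classical
  set rowsJ : Finset ℕ := (colCells lam j).image (fun p => p.1.1) with hrowsJ
  have hrcard : rowsJ.card = (colCells lam j).card := by
    rw [hrowsJ]
    apply Finset.card_image_of_injOn
    intro p hp p' hp' hpp
    exact cell_ext hpp (by
      rw [(Finset.mem_filter.mp hp).2, (Finset.mem_filter.mp hp').2])
  have hmapsto : ∀ p ∈ X, (τ p).1.1 ∈ rowsJ := by
    intro p hp
    have h1 : j ≤ (τ p).1.2 := by rw [hτ p]; exact hX p hp
    have h2 : (τ p).1.2 < lam (τ p).1.1 := cell_lt (τ p)
    have hcell : j < lam (τ p).1.1 := by omega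
    rw [hrowsJ, Finset.mem_image]
    exact ⟨⟨((τ p).1.1, j), mem_cells.mpr hcell⟩, by
      rw [colCells, Finset.mem_filter]; exact ⟨Finset.mem_univ _, rfl⟩, rfl⟩
  obtain ⟨p, hp, q, hq, hpq, heq⟩ :=
    Finset.exists_ne_map_eq_of_card_lt_of_maps_to (by omega) hmapsto
  exact ⟨p, q, hp, hq, hpq, heq⟩

set_option maxHeartbeats 1000000 in
lemma garnir_full_sum (t : Tab lam B) {X : Finset (Cell lam)} {j : ℕ}
    (hX : ∀ p ∈ X, j ≤ p.1.2) (hcard : (colCells lam j).card < X.card) :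
    ∑ σ ∈ SXf lam X,
      (Equiv.Perm.sign σ : ℤ) • polytabloid K lam (permTab lam t σ) = 0 := by
  classical
  have expand : ∀ σ ∈ SXf lam X,
      (Equiv.Perm.sign σ : ℤ) • polytabloid K lam (permTab lam t σ)
      = ∑ τ : Equiv.Perm (Cell lam), (if ColPres lam τ
          then (((Equiv.Perm.sign σ : ℤ) * (Equiv.Perm.sign τ : ℤ)) •
            tabloid K lam (permTab lam t (τ * σ))) else 0) := by
    intro σ _
    unfold polytabloid
    rw [Finset.smul_sum]
    apply Finset.sum_congr rfl
    intro τ _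
    rw [permTab_permTab]
    by_cases h : ColPres lam τ
    · rw [if_pos h, if_pos h, smul_smul]
    · rw [if_neg h, if_neg h, smul_zero]
  rw [Finset.sum_congr rfl expand, Finset.sum_comm]
  apply Finset.sum_eq_zero
  intro τ _
  by_cases hτ : ColPres lam τ
  · obtain ⟨p, q, hpX, hqX, hpq, hrow⟩ := garnir_samerow hX hcard τ hτ
    set g : Equiv.Perm (Cell lam) := τ⁻¹ * (Equiv.swap (τ p) (τ q)) * τ with hg
    have hPQ : τ p ≠ τ q := fun h => hpq (τ.injective h)
    have hsg : Equiv.Perm.sign g = -1 := by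
      rw [hg, Equiv.Perm.sign_mul, Equiv.Perm.sign_mul, Equiv.Perm.sign_inv,
        Equiv.Perm.sign_swap hPQ]
      rcases Int.units_eq_one_or (Equiv.Perm.sign τ) with h | h <;> rw [h] <;> rfl
    have hgX : g ∈ SXf lam X := by
      rw [mem_SXf]
      intro r hr
      rw [hg]
      simp only [Equiv.Perm.mul_apply]
      rw [Equiv.swap_apply_of_ne_of_ne
        (fun h => hr (by rw [← τ.injective h] at hpX; exact hpX))
        (fun h => hr (by rw [← τ.injective h] at hqX; exact hqX))]
      rw [Equiv.Perm.inv_apply_self]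
    have hginv : g * g = 1 := by
      rw [hg]
      have : τ⁻¹ * Equiv.swap (τ p) (τ q) * τ * (τ⁻¹ * Equiv.swap (τ p) (τ q) * τ)
          = τ⁻¹ * (Equiv.swap (τ p) (τ q) * Equiv.swap (τ p) (τ q)) * τ := by
        group
      rw [this, Equiv.swap_mul_self]
      group
    have hgne : ∀ σ : Equiv.Perm (Cell lam), g * σ ≠ σ := by
      intro σ hc
      have hg1 : g = 1 := mul_right_cancel (by rw [one_mul]; exact hc)
      have h2 : g p = p := by rw [hg1]; rfl
      rw [hg] at h2
      simp only [Equiv.Perm.mul_apply] at h2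
      rw [Equiv.swap_apply_left, Equiv.Perm.inv_apply_self] at h2
      exact hpq h2.symm
    have hpermt : ∀ σ : Equiv.Perm (Cell lam),
        permTab lam t (τ * (g * σ)) = permTab lam (permTab lam t (τ * σ)) (Equiv.swap (τ p) (τ q)) := by
      intro σ
      rw [permTab_permTab]
      congr 1
      rw [hg]
      group
    apply Finset.sum_involution (fun σ _ => g * σ)
    · intro σ hσ
      rw [if_pos hτ, if_pos hτ]
      rw [hpermt σ]
      have htab : tabloid K lam (permTab lam (permTab lam t (τ * σ)) (Equiv.swap (τ p) (τ q)))
          = tabloid K lam (permTab lam t (τ * σ)) := by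
        unfold tabloid
        rw [rowData_permTab_rowPres _ (rowPres_swap hrow)]
      rw [htab]
      have hsgn : (Equiv.Perm.sign (g * σ) : ℤ) = -(Equiv.Perm.sign σ : ℤ) := by
        rw [Equiv.Perm.sign_mul, hsg]
        simp
      rw [hsgn]
      rw [← add_smul]
      have : (Equiv.Perm.sign σ : ℤ) * (Equiv.Perm.sign τ : ℤ) +
          -(Equiv.Perm.sign σ : ℤ) * (Equiv.Perm.sign τ : ℤ) = 0 := by ring
      rw [this, zero_smul]
    · intro σ _ _
      exact hgne σ
    · intro σ hσ
      exact SXf_mul hgX hσ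
    · intro σ _
      rw [← mul_assoc, hginv, one_mul]
  · apply Finset.sum_eq_zero
    intro σ _
    rw [if_neg hτ]

end Garnir
section GarnirCoset
open Finset

variable {B : Type*} [LinearOrder B] {lam : ℕ →₀ ℕ}

lemma nsmul_eq_zero_finsupp {α : Type*} {n : ℕ} (hn : n ≠ 0) {v : α →₀ ℤ}
    (h : n • v = 0) : v = 0 := by
  ext a
  have h2 := DFunLike.congr_fun h a
  rw [Finsupp.smul_apply, Finsupp.zero_apply, nsmul_eq_mul] at h2
  rw [Finsupp.zero_apply]
  rcases mul_eq_zero.mp h2 with h3 | h3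
  · exact absurd (by exact_mod_cast h3) hn
  · exact h3

set_option maxHeartbeats 1000000 in
lemma garnir_expand (t : Tab lam B) {X : Finset (Cell lam)} {j : ℕ}
    (hX : ∀ p ∈ X, j ≤ p.1.2) (hcard : (colCells lam j).card < X.card) :
    ∃ R : Finset (Equiv.Perm (Cell lam)),
      (∀ σ ∈ R, (∀ p ∉ X, σ p = p) ∧ ¬ ColPres lam σ) ∧
      polytabloid ℤ lam t = ∑ σ ∈ R,
        (-(Equiv.Perm.sign σ : ℤ)) • polytabloid ℤ lam (permTab lam t σ) := by
  classical
  set H : Subgroup (Equiv.Perm (Cell lam)) := GarH lam X with hH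
  have hHmem : ∀ ρ : Equiv.Perm (Cell lam), ρ ∈ H ↔ ((∀ p ∉ X, ρ p = p) ∧ ColPres lam ρ) := by
    intro ρ; rfl
  set val : Equiv.Perm (Cell lam) → SymMod lam B ℤ :=
    fun σ => (Equiv.Perm.sign σ : ℤ) • polytabloid ℤ lam (permTab lam t σ⁻¹) with hval
  have hval_coset : ∀ σ ρ, ρ ∈ H → val (σ * ρ) = val σ := by
    intro σ ρ hρ
    rw [hval]
    simp only
    have h1 : (σ * ρ)⁻¹ = ρ⁻¹ * σ⁻¹ := by group
    rw [h1, ← permTab_permTab, polytabloid_permTab _ (colPres_inv ((hHmem ρ).mp hρ).2)]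
    rw [smul_smul, Equiv.Perm.sign_mul, Equiv.Perm.sign_inv]
    rcases Int.units_eq_one_or (Equiv.Perm.sign ρ) with h | h <;>
      rcases Int.units_eq_one_or (Equiv.Perm.sign σ) with h' | h' <;>
      rw [h, h'] <;> norm_num
  have hfull : ∑ σ ∈ SXf lam X, val σ = 0 := by
    have hbij : ∑ σ ∈ SXf lam X, val σ = ∑ σ ∈ SXf lam X,
        (Equiv.Perm.sign σ : ℤ) • polytabloid ℤ lam (permTab lam t σ) := by
      apply Finset.sum_nbij' (fun σ => σ⁻¹) (fun σ => σ⁻¹)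
      · intro σ hσ; exact SXf_inv hσ
      · intro σ hσ; exact SXf_inv hσ
      · intro σ _; simp
      · intro σ _; simp
      · intro σ _
        rw [hval]
        simp only [Equiv.Perm.sign_inv, inv_inv]
    rw [hbij]
    exact garnir_full_sum t hX hcard
  set rep : Equiv.Perm (Cell lam) → Equiv.Perm (Cell lam) :=
    fun σ => Quotient.out (QuotientGroup.mk (s := H) σ) with hrep
  have hrep_mk : ∀ σ, QuotientGroup.mk (s := H) (rep σ) = QuotientGroup.mk (s := H) σ := by
    intro σ
    rw [hrep]
    exact QuotientGroup.out_eq' _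
  have hrep_coset : ∀ σ, σ⁻¹ * rep σ ∈ H := by
    intro σ
    exact QuotientGroup.eq.mp (hrep_mk σ).symm
  have hrep_val : ∀ σ, val (rep σ) = val σ := by
    intro σ
    have : rep σ = σ * (σ⁻¹ * rep σ) := by group
    rw [this, hval_coset σ _ (hrep_coset σ)]
  have hrep_idem : ∀ σ, rep (rep σ) = rep σ := by
    intro σ
    rw [hrep]
    simp only
    rw [QuotientGroup.out_eq' (QuotientGroup.mk (s := H) σ)]
  have hrep_SXf : ∀ σ ∈ SXf lam X, rep σ ∈ SXf lam X := by
    intro σ hσ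
    have h1 : rep σ = σ * (σ⁻¹ * rep σ) := by group
    rw [h1]
    exact SXf_mul hσ (mem_SXf.mpr ((hHmem _).mp (hrep_coset σ)).1)
  set R₀ : Finset (Equiv.Perm (Cell lam)) := (SXf lam X).image rep with hR₀
  set Hcard : ℕ := (Finset.univ.filter (fun ρ : Equiv.Perm (Cell lam) => ρ ∈ H)).card
    with hHcard
  have hHcard_pos : Hcard ≠ 0 := by
    rw [hHcard]
    apply Finset.card_ne_zero_of_mem (a := 1)
    rw [Finset.mem_filter]
    exact ⟨Finset.mem_univ _, H.one_mem⟩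
  have hfiber : ∀ c ∈ R₀, ((SXf lam X).filter (fun σ => rep σ = c)).card = Hcard := by
    intro c hc
    obtain ⟨σ₀, hσ₀, rfl⟩ := Finset.mem_image.mp hc
    have hcX : rep σ₀ ∈ SXf lam X := hrep_SXf σ₀ hσ₀
    rw [hHcard]
    apply Finset.card_bij' (fun σ _ => (rep σ₀)⁻¹ * σ) (fun ρ _ => rep σ₀ * ρ)
    · intro σ hσ
      rw [Finset.mem_filter] at hσ ⊢
      refine ⟨Finset.mem_univ _, ?_⟩
      have : QuotientGroup.mk (s := H) σ = QuotientGroup.mk (s := H) (rep σ₀) := by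
        rw [← hσ.2, hrep_mk σ]
      exact QuotientGroup.eq.mp this.symm
    · intro ρ hρ
      rw [Finset.mem_filter] at hρ ⊢
      refine ⟨SXf_mul hcX (mem_SXf.mpr ((hHmem ρ).mp hρ.2).1), ?_⟩
      have h1 : QuotientGroup.mk (s := H) (rep σ₀ * ρ) = QuotientGroup.mk (s := H) (rep σ₀) := by
        apply (QuotientGroup.eq (s := H)).mpr
        have : (rep σ₀ * ρ)⁻¹ * rep σ₀ = ρ⁻¹ := by group
        rw [this]
        exact H.inv_mem hρ.2
      show Quotient.out (QuotientGroup.mk (s := H) (rep σ₀ * ρ)) = rep σ₀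
      rw [h1]
      exact hrep_idem σ₀
    · intro σ _; group
    · intro ρ _; group
  have hsum2 : ∑ σ ∈ SXf lam X, val σ = ∑ c ∈ R₀, Hcard • val c := by
    rw [Finset.sum_congr rfl (fun σ hσ => (hrep_val σ).symm), Finset.sum_comp val rep]
    apply Finset.sum_congr rfl
    intro c hc
    rw [hfiber c hc]
  have hR₀sum : ∑ c ∈ R₀, val c = 0 := by
    apply nsmul_eq_zero_finsupp hHcard_pos
    rw [Finset.smul_sum]
    rw [← hsum2, hfull]
  set c₀ : Equiv.Perm (Cell lam) := rep 1 with hc₀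
  have hc₀R : c₀ ∈ R₀ := Finset.mem_image_of_mem rep SXf_one
  have hval_c₀ : val c₀ = polytabloid ℤ lam t := by
    rw [hc₀, hrep_val 1, hval]
    simp only [Equiv.Perm.sign_one, inv_one]
    rw [permTab_one]
    norm_num
  have hsplit : polytabloid ℤ lam t = -∑ c ∈ R₀.erase c₀, val c := by
    have h1 := Finset.add_sum_erase R₀ val hc₀R
    rw [hval_c₀] at h1
    rw [← h1] at hR₀sum
    exact eq_neg_of_add_eq_zero_left hR₀sum
  have hR₀X : ∀ c ∈ R₀, c ∈ SXf lam X := by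
    intro c hc
    obtain ⟨σ₀, hσ₀, rfl⟩ := Finset.mem_image.mp hc
    exact hrep_SXf σ₀ hσ₀
  have hR₀H : ∀ c ∈ R₀.erase c₀, ¬ ColPres lam c := by
    intro c hc hcp
    have hcR := Finset.mem_of_mem_erase hc
    have hcH : c ∈ H := (hHmem c).mpr ⟨mem_SXf.mp (hR₀X c hcR), hcp⟩
    have hmkc : QuotientGroup.mk (s := H) c
        = QuotientGroup.mk (s := H) (1 : Equiv.Perm (Cell lam)) := by
      apply (QuotientGroup.eq (s := H)).mpr
      simpa using H.inv_mem hcH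
    have hrc : rep c = c₀ := by
      show Quotient.out (QuotientGroup.mk (s := H) c) = c₀
      rw [hmkc]
    have hceq : c = c₀ := by
      obtain ⟨σ₀, hσ₀, rfl⟩ := Finset.mem_image.mp hcR
      rw [hrep_idem σ₀] at hrc
      exact hrc
    exact (Finset.ne_of_mem_erase hc) hceq
  refine ⟨(R₀.erase c₀).image (fun c => c⁻¹), ?_, ?_⟩
  · intro σ hσ
    obtain ⟨c, hc, rfl⟩ := Finset.mem_image.mp hσ
    constructor
    · exact mem_SXf.mp (SXf_inv (hR₀X c (Finset.mem_of_mem_erase hc)))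
    · intro hcp
      refine hR₀H c hc ?_
      have h2 := colPres_inv hcp
      rwa [inv_inv] at h2
  · rw [hsplit]
    rw [Finset.sum_image (by intro x _ y _ h; exact inv_injective h)]
    rw [← Finset.sum_neg_distrib]
    apply Finset.sum_congr rfl
    intro c _
    rw [hval]
    simp only
    rw [Equiv.Perm.sign_inv, neg_smul]

end GarnirCoset
section Measure
open Finset

variable {B : Type*} [LinearOrder B] {lam : ℕ →₀ ℕ}

/-- The rank of `b` among the entries of `t`. -/
noncomputable def rkv (t : Tab lam B) (b : B) : ℕ :=
  ((Finset.univ.image t).filter (fun e => e ≤ b)).card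

/-- The column-weight statistic. -/
noncomputable def muM (t : Tab lam B) : ℕ := ∑ p : Cell lam, p.1.2 * rkv t (t p)

/-- The number of column inversions. -/
noncomputable def invC (t : Tab lam B) : ℕ :=
  (Finset.univ.filter (fun pq : Cell lam × Cell lam =>
    pq.1.1.2 = pq.2.1.2 ∧ pq.1.1.1 < pq.2.1.1 ∧ t pq.2 < t pq.1)).card

noncomputable def muBound (lam : ℕ →₀ ℕ) : ℕ :=
  Fintype.card (Cell lam) * (Mcol lam * Fintype.card (Cell lam))

noncomputable def invBound (lam : ℕ →₀ ℕ) : ℕ :=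
  Fintype.card (Cell lam) * Fintype.card (Cell lam) + 1

lemma image_permTab (t : Tab lam B) (σ : Equiv.Perm (Cell lam)) :
    Finset.univ.image (permTab lam t σ) = Finset.univ.image t := by
  ext b
  simp only [Finset.mem_image, Finset.mem_univ, true_and]
  constructor
  · rintro ⟨p, rfl⟩; exact ⟨σ⁻¹ p, rfl⟩
  · rintro ⟨p, rfl⟩; exact ⟨σ p, by rw [permTab_apply, Equiv.Perm.inv_apply_self]⟩

lemma rkv_permTab (t : Tab lam B) (σ : Equiv.Perm (Cell lam)) (b : B) :
    rkv (permTab lam t σ) b = rkv t b := by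
  unfold rkv
  rw [image_permTab]

lemma rkv_mono (t : Tab lam B) {a b : B} (h : a ≤ b) : rkv t a ≤ rkv t b := by
  unfold rkv
  apply Finset.card_le_card
  intro e he
  rw [Finset.mem_filter] at he ⊢
  exact ⟨he.1, le_trans he.2 h⟩

lemma rkv_strict (t : Tab lam B) {a b : B} (h : a < b) (hb : b ∈ Finset.univ.image t) :
    rkv t a < rkv t b := by
  unfold rkv
  apply Finset.card_lt_card
  rw [Finset.ssubset_iff_of_subset]
  · exact ⟨b, Finset.mem_filter.mpr ⟨hb, le_refl b⟩, fun hc =>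
      absurd (Finset.mem_filter.mp hc).2 (not_le.mpr h)⟩
  · intro e he
    rw [Finset.mem_filter] at he ⊢
    exact ⟨he.1, le_trans he.2 (le_of_lt h)⟩

lemma rkv_le_card (t : Tab lam B) (b : B) : rkv t b ≤ Fintype.card (Cell lam) := by
  unfold rkv
  calc ((Finset.univ.image t).filter (fun e => e ≤ b)).card
      ≤ (Finset.univ.image t).card := Finset.card_filter_le _ _
    _ ≤ (Finset.univ : Finset (Cell lam)).card := Finset.card_image_le
    _ = Fintype.card (Cell lam) := Finset.card_univ

lemma muM_le (t : Tab lam B) : muM t ≤ muBound lam := by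
  unfold muM muBound
  calc ∑ p : Cell lam, p.1.2 * rkv t (t p)
      ≤ ∑ _p : Cell lam, Mcol lam * Fintype.card (Cell lam) := by
        apply Finset.sum_le_sum
        intro p _
        exact Nat.mul_le_mul (le_of_lt (col_lt_Mcol p)) (rkv_le_card t (t p))
    _ = Fintype.card (Cell lam) * (Mcol lam * Fintype.card (Cell lam)) := by
        rw [Finset.sum_const, Finset.card_univ, smul_eq_mul]

lemma invC_lt_invBound (t : Tab lam B) : invC t < invBound lam := by
  unfold invC invBound
  have h1 : (Finset.univ.filter (fun pq : Cell lam × Cell lam =>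
      pq.1.1.2 = pq.2.1.2 ∧ pq.1.1.1 < pq.2.1.1 ∧ t pq.2 < t pq.1)).card
      ≤ (Finset.univ : Finset (Cell lam × Cell lam)).card := Finset.card_filter_le _ _
  rw [Finset.card_univ, Fintype.card_prod] at h1
  omega

lemma muM_permTab (t : Tab lam B) (σ : Equiv.Perm (Cell lam)) :
    muM (permTab lam t σ) = ∑ q : Cell lam, (σ q).1.2 * rkv t (t q) := by
  unfold muM
  have h1 : ∀ p : Cell lam, p.1.2 * rkv (permTab lam t σ) (permTab lam t σ p)
      = p.1.2 * rkv t (t (σ⁻¹ p)) := by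
    intro p
    rw [rkv_permTab, permTab_apply]
  rw [Finset.sum_congr rfl (fun p _ => h1 p)]
  rw [← Equiv.sum_comp σ (fun p => p.1.2 * rkv t (t (σ⁻¹ p)))]
  apply Finset.sum_congr rfl
  intro q _
  rw [Equiv.Perm.inv_apply_self]

lemma muM_colPres (t : Tab lam B) {σ : Equiv.Perm (Cell lam)} (hσ : ColPres lam σ) :
    muM (permTab lam t σ) = muM t := by
  rw [muM_permTab]
  apply Finset.sum_congr rfl
  intro q _
  rw [hσ q]

lemma sum_sigma_X {M : Type*} [AddCommMonoid M] {X : Finset (Cell lam)}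
    {σ : Equiv.Perm (Cell lam)} (hσ : σ ∈ SXf lam X) (f : Cell lam → M) :
    ∑ q ∈ X, f (σ q) = ∑ q ∈ X, f q := by
  apply Finset.sum_nbij' (fun q => σ q) (fun q => σ⁻¹ q)
  · intro q hq; exact SXf_maps hσ hq
  · intro q hq; exact SXf_maps (SXf_inv hσ) hq
  · intro q _; rw [Equiv.Perm.inv_apply_self]
  · intro q _; rw [Equiv.Perm.apply_inv_self]
  · intro q _; rfl

set_option maxHeartbeats 1000000 in
lemma muM_lt_of_garnir {t : Tab lam B} {X : Finset (Cell lam)} {j : ℕ}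
    (hXcol : ∀ p ∈ X, p.1.2 = j ∨ p.1.2 = j + 1)
    (hAB : ∀ p q : Cell lam, p ∈ X → q ∈ X → p.1.2 = j → q.1.2 = j + 1 → t q < t p)
    {σ : Equiv.Perm (Cell lam)} (hfix : ∀ p ∉ X, σ p = p) (hncp : ¬ ColPres lam σ) :
    muM t < muM (permTab lam t σ) := by
  classical
  have hσX : σ ∈ SXf lam X := mem_SXf.mpr hfix
  set r : Cell lam → ℕ := fun q => rkv t (t q) with hr
  set A1 : Finset (Cell lam) := X.filter (fun q => q.1.2 = j ∧ (σ q).1.2 = j + 1) with hA1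
  set B1 : Finset (Cell lam) := X.filter (fun q => q.1.2 = j + 1 ∧ (σ q).1.2 = j) with hB1
  -- counting: |A1| = |B1|
  have hcount : A1.card = B1.card := by
    have hcs : ∑ q ∈ X, ((if (σ q).1.2 = j + 1 then 1 else 0) : ℕ)
        = ∑ q ∈ X, ((if q.1.2 = j + 1 then 1 else 0) : ℕ) :=
      sum_sigma_X hσX (fun q => if q.1.2 = j + 1 then 1 else 0)
    have hsplit1 : ∀ q ∈ X, ((if (σ q).1.2 = j + 1 then 1 else 0) : ℕ)
        = (if (q.1.2 = j ∧ (σ q).1.2 = j + 1) then 1 else 0)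
          + (if (q.1.2 = j + 1 ∧ (σ q).1.2 = j + 1) then 1 else 0) := by
      intro q hq
      rcases hXcol q hq with h | h <;> simp [h]
    have hsplit2 : ∀ q ∈ X, ((if q.1.2 = j + 1 then 1 else 0) : ℕ)
        = (if (q.1.2 = j + 1 ∧ (σ q).1.2 = j) then 1 else 0)
          + (if (q.1.2 = j + 1 ∧ (σ q).1.2 = j + 1) then 1 else 0) := by
      intro q hq
      rcases hXcol (σ q) (SXf_maps hσX hq) with h | h <;> simp [h]
    rw [Finset.sum_congr rfl hsplit1, Finset.sum_congr rfl hsplit2,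
      Finset.sum_add_distrib, Finset.sum_add_distrib] at hcs
    have e1 : A1.card = ∑ q ∈ X, ((if (q.1.2 = j ∧ (σ q).1.2 = j + 1) then 1 else 0) : ℕ) := by
      rw [hA1, Finset.card_filter]
    have e2 : B1.card = ∑ q ∈ X, ((if (q.1.2 = j + 1 ∧ (σ q).1.2 = j) then 1 else 0) : ℕ) := by
      rw [hB1, Finset.card_filter]
    omega
  -- B1 nonempty
  have hmoved : ∃ p ∈ X, (σ p).1.2 ≠ p.1.2 := by
    by_contra hc
    push_neg at hc
    apply hncp
    intro p
    by_cases hp : p ∈ X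
    · exact hc p hp
    · rw [hfix p hp]
  have hA1ne : A1.Nonempty := by
    obtain ⟨p, hpX, hpm⟩ := hmoved
    rcases hXcol p hpX with h | h
    · refine ⟨p, Finset.mem_filter.mpr ⟨hpX, h, ?_⟩⟩
      rcases hXcol (σ p) (SXf_maps hσX hpX) with h' | h'
      · exact absurd (by rw [h', h]) hpm
      · exact h'
    · have hB1ne : B1.Nonempty := by
        refine ⟨p, Finset.mem_filter.mpr ⟨hpX, h, ?_⟩⟩
        rcases hXcol (σ p) (SXf_maps hσX hpX) with h' | h'
        · exact h'
        · exact absurd (by rw [h', h]) hpm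
      rw [← Finset.card_pos, hcount, Finset.card_pos]
      exact hB1ne
  have hB1ne : B1.Nonempty := by
    rw [← Finset.card_pos, ← hcount, Finset.card_pos]
    exact hA1ne
  -- the rank gap
  obtain ⟨b₀, hb₀B1, hb₀max⟩ := Finset.exists_max_image B1 t hB1ne
  have hb₀X : b₀ ∈ X := (Finset.mem_filter.mp hb₀B1).1
  have hb₀col : b₀.1.2 = j + 1 := (Finset.mem_filter.mp hb₀B1).2.1
  set M : ℕ := r b₀ with hM
  have hB1le : ∀ q ∈ B1, r q ≤ M := by
    intro q hq
    exact rkv_mono t (hb₀max q hq)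
  have hA1ge : ∀ q ∈ A1, M + 1 ≤ r q := by
    intro q hq
    have hqX := (Finset.mem_filter.mp hq).1
    have hqcol := (Finset.mem_filter.mp hq).2.1
    have : t b₀ < t q := hAB q b₀ hqX hb₀X hqcol hb₀col
    have h2 := rkv_strict t this (Finset.mem_image_of_mem t (Finset.mem_univ q))
    rw [hM]
    simp only [hr]
    omega
  -- main term comparison
  have hmain : ∀ q ∈ X, q.1.2 * r q + (if (q.1.2 = j ∧ (σ q).1.2 = j + 1) then r q else 0)
      = (σ q).1.2 * r q + (if (q.1.2 = j + 1 ∧ (σ q).1.2 = j) then r q else 0) := by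
    intro q hq
    rcases hXcol q hq with h | h <;> rcases hXcol (σ q) (SXf_maps hσX hq) with h' | h' <;>
      simp [h, h'] <;> ring
  have hsum : ∑ q ∈ X, q.1.2 * r q + ∑ q ∈ A1, r q
      = ∑ q ∈ X, (σ q).1.2 * r q + ∑ q ∈ B1, r q := by
    rw [hA1, hB1, Finset.sum_filter, Finset.sum_filter, ← Finset.sum_add_distrib,
      ← Finset.sum_add_distrib]
    exact Finset.sum_congr rfl hmain
  have hAsum : A1.card * (M + 1) ≤ ∑ q ∈ A1, r q := by
    have := Finset.card_nsmul_le_sum A1 r (M + 1) hA1ge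
    rwa [smul_eq_mul] at this
  have hBsum : ∑ q ∈ B1, r q ≤ B1.card * M := by
    have := Finset.sum_le_card_nsmul B1 r M hB1le
    rwa [smul_eq_mul] at this
  have hA1pos : 1 ≤ A1.card := Finset.card_pos.mpr hA1ne
  have hstrict : ∑ q ∈ X, q.1.2 * r q < ∑ q ∈ X, (σ q).1.2 * r q := by
    have h1 := hsum
    nlinarith [hAsum, hBsum, hcount, hA1pos]
  -- conclude
  rw [muM_permTab]
  show muM t < ∑ q : Cell lam, (σ q).1.2 * r q
  have hsplitL := Finset.sum_add_sum_compl X (fun q : Cell lam => q.1.2 * r q)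
  have hsplitR := Finset.sum_add_sum_compl X (fun q : Cell lam => (σ q).1.2 * r q)
  have hfixc : ∀ q ∈ Xᶜ, (σ q).1.2 * r q = q.1.2 * r q := by
    intro q hq
    rw [hfix q (Finset.mem_compl.mp hq)]
  have hcompl : ∑ q ∈ Xᶜ, (σ q).1.2 * r q = ∑ q ∈ Xᶜ, q.1.2 * r q :=
    Finset.sum_congr rfl hfixc
  rw [hcompl] at hsplitR
  have hL : muM t = ∑ q ∈ X, q.1.2 * r q + ∑ q ∈ Xᶜ, q.1.2 * r q := by
    unfold muM
    rw [hsplitL]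
  rw [hL, ← hsplitR]
  omega

end Measure
section Sorting
open Finset

variable {B : Type*} [LinearOrder B] {lam : ℕ →₀ ℕ}

lemma swap_row_lt {p q : Cell lam} (hcol : p.1.2 = q.1.2) (hadj : q.1.1 = p.1.1 + 1)
    {a b : Cell lam} (hc : a.1.2 = b.1.2) (hr : a.1.1 < b.1.1) (hnot : ¬(a = p ∧ b = q)) :
    (Equiv.swap p q a).1.1 < (Equiv.swap p q b).1.1 := by
  by_cases hap : a = p
  · have hbq : b ≠ q := fun h => hnot ⟨hap, h⟩
    have hbp : b ≠ p := by
      intro h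
      rw [hap, h] at hr
      omega
    rw [hap, Equiv.swap_apply_left, Equiv.swap_apply_of_ne_of_ne hbp hbq]
    rw [hap] at hr hc
    have hbrow : b.1.1 ≠ q.1.1 := by
      intro h
      exact hbq (cell_ext h (by rw [← hc, hcol]))
    omega
  · by_cases haq : a = q
    · have hbp : b ≠ p := by
        intro h
        rw [haq, h] at hr
        omega
      have hbq : b ≠ q := by
        intro h
        rw [haq, h] at hr
        omega
      rw [haq, Equiv.swap_apply_right, Equiv.swap_apply_of_ne_of_ne hbp hbq]
      rw [haq] at hr
      omega
    · rw [Equiv.swap_apply_of_ne_of_ne hap haq]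
      by_cases hbp : b = p
      · rw [hbp, Equiv.swap_apply_left]
        rw [hbp] at hr
        omega
      · by_cases hbq : b = q
        · rw [hbq, Equiv.swap_apply_right]
          rw [hbq] at hr hc
          have harow : a.1.1 ≠ p.1.1 := by
            intro h
            exact hap (cell_ext h (by rw [hc, hcol]))
          omega
        · rw [Equiv.swap_apply_of_ne_of_ne hbp hbq]
          exact hr

set_option maxHeartbeats 1000000 in
lemma invC_swap_lt {t : Tab lam B} {p q : Cell lam} (hcol : p.1.2 = q.1.2)
    (hadj : q.1.1 = p.1.1 + 1) (hval : t q < t p) :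
    invC (permTab lam t (Equiv.swap p q)) < invC t := by
  classical
  set τ : Equiv.Perm (Cell lam) := Equiv.swap p q with hτ
  have hpq : p ≠ q := fun h => by rw [h] at hadj; omega
  have htapp : ∀ x : Cell lam, permTab lam t τ x = t (τ x) := by
    intro x
    rw [permTab_apply, hτ, Equiv.swap_inv]
  have hτcol : ∀ x : Cell lam, (τ x).1.2 = x.1.2 := colPres_swap hcol
  set S' : Finset (Cell lam × Cell lam) := Finset.univ.filter
    (fun ab : Cell lam × Cell lam => ab.1.1.2 = ab.2.1.2 ∧ ab.1.1.1 < ab.2.1.1 ∧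
      permTab lam t τ ab.2 < permTab lam t τ ab.1) with hS'
  set S : Finset (Cell lam × Cell lam) := Finset.univ.filter
    (fun ab : Cell lam × Cell lam => ab.1.1.2 = ab.2.1.2 ∧ ab.1.1.1 < ab.2.1.1 ∧
      t ab.2 < t ab.1) with hS
  have hmaps : ∀ ab ∈ S', (τ ab.1, τ ab.2) ∈ S := by
    intro ab hab
    rw [hS', Finset.mem_filter] at hab
    obtain ⟨-, hc, hr, hv⟩ := hab
    have hc' : ab.1.1.2 = ab.2.1.2 := hc
    have hr' : ab.1.1.1 < ab.2.1.1 := hr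
    have hv' : t (τ ab.2) < t (τ ab.1) := by
      rw [← htapp, ← htapp]
      exact hv
    have hnot : ¬(ab.1 = p ∧ ab.2 = q) := by
      rintro ⟨h1, h2⟩
      rw [h1, h2] at hv'
      rw [hτ, Equiv.swap_apply_left, Equiv.swap_apply_right] at hv'
      exact absurd hv' (not_lt.mpr (le_of_lt hval))
    rw [hS, Finset.mem_filter]
    refine ⟨Finset.mem_univ _, ?_, ?_, ?_⟩
    · show (τ ab.1).1.2 = (τ ab.2).1.2
      rw [hτcol, hτcol]
      exact hc'
    · show (τ ab.1).1.1 < (τ ab.2).1.1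
      rw [hτ]
      exact swap_row_lt hcol hadj hc' hr' hnot
    · show t (τ ab.2) < t (τ ab.1)
      exact hv'
  have hpqS : (p, q) ∈ S := by
    rw [hS, Finset.mem_filter]
    refine ⟨Finset.mem_univ _, hcol, ?_, hval⟩
    show p.1.1 < q.1.1
    omega
  have hinj : Set.InjOn (fun ab : Cell lam × Cell lam => (τ ab.1, τ ab.2)) S' := by
    intro x _ y _ h
    have h1 : τ x.1 = τ y.1 := congrArg Prod.fst h
    have h2 : τ x.2 = τ y.2 := congrArg Prod.snd h
    exact Prod.ext (τ.injective h1) (τ.injective h2)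
  have hnotin : (p, q) ∉ S'.image (fun ab : Cell lam × Cell lam => (τ ab.1, τ ab.2)) := by
    rw [Finset.mem_image]
    rintro ⟨ab, hab, heq⟩
    have ha : τ ab.1 = p := congrArg Prod.fst heq
    have hb : τ ab.2 = q := congrArg Prod.snd heq
    have ha' : ab.1 = q := by
      apply τ.injective
      rw [ha, hτ, Equiv.swap_apply_right]
    have hb' : ab.2 = p := by
      apply τ.injective
      rw [hb, hτ, Equiv.swap_apply_left]
    rw [hS', Finset.mem_filter] at hab
    obtain ⟨-, -, hr, -⟩ := hab
    have hr2 : ab.1.1.1 < ab.2.1.1 := hr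
    rw [ha', hb'] at hr2
    omega
  have hsub : S'.image (fun ab : Cell lam × Cell lam => (τ ab.1, τ ab.2)) ⊂ S := by
    constructor
    · intro ab hab
      rw [Finset.mem_image] at hab
      obtain ⟨cd, hcd, rfl⟩ := hab
      exact hmaps cd hcd
    · intro hcon
      exact hnotin (hcon hpqS)
  have hcards : S'.card = (S'.image (fun ab : Cell lam × Cell lam => (τ ab.1, τ ab.2))).card :=
    (Finset.card_image_of_injOn hinj).symm
  have hlt := Finset.card_lt_card hsub
  unfold invC
  rw [← hS', ← hS]
  omega

lemma col_complete (hlam : IsPartition lam) {t : Tab lam B}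
    (h : ∀ p q : Cell lam, p.1.2 = q.1.2 → q.1.1 = p.1.1 + 1 → t p ≤ t q) :
    ∀ p q : Cell lam, p.1.2 = q.1.2 → p.1.1 ≤ q.1.1 → t p ≤ t q := by
  have key : ∀ d : ℕ, ∀ p q : Cell lam, p.1.2 = q.1.2 → q.1.1 = p.1.1 + d → t p ≤ t q := by
    intro d
    induction d with
    | zero =>
      intro p q hc hr
      have : p = q := cell_ext (by omega) hc
      rw [this]
    | succ d ih =>
      intro p q hc hr
      have hq' : q.1.2 < lam (p.1.1 + d) := by
        have h1 := cell_lt q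
        have h2 : lam q.1.1 ≤ lam (p.1.1 + d) := hlam _ _ (by omega)
        omega
      set q' : Cell lam := ⟨(p.1.1 + d, q.1.2), mem_cells.mpr hq'⟩ with hq'def
      have h1 : t p ≤ t q' := ih p q' hc rfl
      have h2 : t q' ≤ t q := h q' q rfl (by rw [hr]; rfl)
      exact le_trans h1 h2
  intro p q hc hr
  exact key (q.1.1 - p.1.1) p q hc (by omega)

lemma row_complete {t : Tab lam B}
    (h : ∀ p q : Cell lam, p.1.1 = q.1.1 → q.1.2 = p.1.2 + 1 → t p ≤ t q) :
    RowsWeak lam (· ≤ ·) t := by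
  have key : ∀ d : ℕ, ∀ p q : Cell lam, p.1.1 = q.1.1 → q.1.2 = p.1.2 + d → t p ≤ t q := by
    intro d
    induction d with
    | zero =>
      intro p q hr hc
      have : p = q := cell_ext hr (by omega)
      rw [this]
    | succ d ih =>
      intro p q hr hc
      have hq' : p.1.2 + d < lam q.1.1 := by
        have h1 := cell_lt q
        omega
      set q' : Cell lam := ⟨(q.1.1, p.1.2 + d), mem_cells.mpr hq'⟩ with hq'def
      have h1 : t p ≤ t q' := ih p q' hr rfl
      have h2 : t q' ≤ t q := h q' q rfl (by rw [hc]; rfl)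
      exact le_trans h1 h2
  intro p q hr hc
  exact key (q.1.2 - p.1.2) p q hr (by omega)

end Sorting
section Span
open Finset

variable {K : Type*} [CommRing K] {B : Type*} [LinearOrder B] {lam : ℕ →₀ ℕ}

noncomputable def measureT (t : Tab lam B) : ℕ :=
  (muBound lam + 1 - muM t) * invBound lam + invC t

lemma measureT_lt_of_mu_lt {t u : Tab lam B} (h : muM t < muM u) :
    measureT u < measureT t := by
  unfold measureT
  have h1 := muM_le u
  have h2 := muM_le t
  have h3 := invC_lt_invBound u
  have h4 := invC_lt_invBound t
  calc (muBound lam + 1 - muM u) * invBound lam + invC u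
      < (muBound lam + 1 - muM u) * invBound lam + invBound lam := by omega
    _ = (muBound lam + 1 - muM u + 1) * invBound lam := by ring
    _ ≤ (muBound lam + 1 - muM t) * invBound lam := Nat.mul_le_mul_right _ (by omega)
    _ ≤ (muBound lam + 1 - muM t) * invBound lam + invC t := Nat.le_add_right _ _

lemma measureT_lt_of_inv_lt {t u : Tab lam B} (hmu : muM u = muM t)
    (h : invC u < invC t) : measureT u < measureT t := by
  unfold measureT
  rw [hmu]
  omega

set_option maxHeartbeats 2000000 in
lemma spanZ (hlam : IsPartition lam) (t : Tab lam B) :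
    polytabloid ℤ lam t ∈ Submodule.span ℤ
      (Set.range (fun s : SSYT lam B => polytabloid ℤ lam s.1)) := by
  classical
  suffices h : ∀ n : ℕ, ∀ u : Tab lam B, measureT u = n → polytabloid ℤ lam u ∈
      Submodule.span ℤ (Set.range (fun s : SSYT lam B => polytabloid ℤ lam s.1)) from
    h _ t rfl
  intro n
  induction n using Nat.strong_induction_on with
  | _ n ih =>
  intro t hn
  by_cases hrep : ∃ p q : Cell lam, p ≠ q ∧ p.1.2 = q.1.2 ∧ t p = t q
  · obtain ⟨p, q, hne, hc, hv⟩ := hrep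
    rw [polytabloid_eq_zero_of_col_repeat hne hc hv]
    exact Submodule.zero_mem _
  push_neg at hrep
  by_cases hadjinv : ∃ p q : Cell lam, p.1.2 = q.1.2 ∧ q.1.1 = p.1.1 + 1 ∧ t q < t p
  · -- column sorting step
    obtain ⟨p, q, hc, ha, hv⟩ := hadjinv
    set τ : Equiv.Perm (Cell lam) := Equiv.swap p q with hτ
    have hcp : ColPres lam τ := colPres_swap hc
    have heq : polytabloid ℤ lam t = (Equiv.Perm.sign τ : ℤ) •
        polytabloid ℤ lam (permTab lam t τ) := by
      rw [polytabloid_permTab t hcp, smul_smul, sign_sq, one_smul]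
    rw [heq]
    apply Submodule.smul_mem
    apply ih (measureT (permTab lam t τ)) _ (permTab lam t τ) rfl
    rw [← hn]
    exact measureT_lt_of_inv_lt (muM_colPres t hcp) (invC_swap_lt hc ha hv)
  push_neg at hadjinv
  have hwk : ∀ p q : Cell lam, p.1.2 = q.1.2 → p.1.1 ≤ q.1.1 → t p ≤ t q :=
    col_complete hlam (fun p q hc' ha' => hadjinv p q hc' ha')
  have hcs : ∀ p q : Cell lam, p.1.2 = q.1.2 → p.1.1 < q.1.1 → t p < t q := by
    intro p q hc hr
    have hne : p ≠ q := fun h => by rw [h] at hr; omega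
    exact lt_of_le_of_ne (hwk p q hc (le_of_lt hr)) (hrep p q hne hc)
  by_cases hrow : ∃ p q : Cell lam, p.1.1 = q.1.1 ∧ q.1.2 = p.1.2 + 1 ∧ t q < t p
  · -- Garnir step
    obtain ⟨p0, q0, hr0, hc0, hv0⟩ := hrow
    set j : ℕ := p0.1.2 with hj
    set A : Finset (Cell lam) := (colCells lam j).filter (fun r => p0.1.1 ≤ r.1.1) with hA
    set Bs : Finset (Cell lam) := (colCells lam (j+1)).filter (fun r => r.1.1 ≤ p0.1.1)
      with hBs
    set X : Finset (Cell lam) := A ∪ Bs with hX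
    have hcolA : ∀ r ∈ A, r.1.2 = j := by
      intro r hr
      exact (Finset.mem_filter.mp (Finset.mem_filter.mp hr).1).2
    have hcolB : ∀ r ∈ Bs, r.1.2 = j + 1 := by
      intro r hr
      exact (Finset.mem_filter.mp (Finset.mem_filter.mp hr).1).2
    have hXcol : ∀ r ∈ X, r.1.2 = j ∨ r.1.2 = j + 1 := by
      intro r hr
      rcases Finset.mem_union.mp hr with h | h
      · exact Or.inl (hcolA r h)
      · exact Or.inr (hcolB r h)
    have hXj : ∀ r ∈ X, j ≤ r.1.2 := by
      intro r hr
      rcases hXcol r hr with h | h <;> omega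
    have hdisj : Disjoint A Bs := by
      rw [Finset.disjoint_left]
      intro r hrA hrB
      have := hcolA r hrA
      have := hcolB r hrB
      omega
    have hcardA : (colCells lam j).card ≤ A.card + p0.1.1 := by
      have hsplit : A.card + ((colCells lam j).filter (fun r => ¬ p0.1.1 ≤ r.1.1)).card
          = (colCells lam j).card := by
        rw [hA]
        exact Finset.card_filter_add_card_filter_not _
      have hcompl : ((colCells lam j).filter (fun r => ¬ p0.1.1 ≤ r.1.1)).card
          ≤ (Finset.range p0.1.1).card := by
        apply Finset.card_le_card_of_injOn (fun r => r.1.1)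
        · intro r hr
          rw [Finset.mem_coe, Finset.mem_filter] at hr
          rw [Finset.mem_coe, Finset.mem_range]
          show r.1.1 < p0.1.1
          omega
        · intro r hr r' hr' hrr
          rw [Finset.mem_coe, Finset.mem_filter] at hr hr'
          exact cell_ext hrr (by
            rw [(Finset.mem_filter.mp hr.1).2, (Finset.mem_filter.mp hr'.1).2])
      rw [Finset.card_range] at hcompl
      omega
    have hq0row : q0.1.1 = p0.1.1 := hr0.symm
    have hq0col : q0.1.2 = j + 1 := hc0
    have hcardB : p0.1.1 + 1 ≤ Bs.card := by
      have hsub : Finset.range (p0.1.1 + 1) ⊆ Bs.image (fun r => r.1.1) := by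
        intro i hi
        rw [Finset.mem_range] at hi
        have hlami : j + 1 < lam i := by
          have h1 : lam q0.1.1 ≤ lam i := hlam i q0.1.1 (by omega)
          have h2 := cell_lt q0
          omega
        rw [Finset.mem_image]
        refine ⟨⟨(i, j+1), mem_cells.mpr hlami⟩, ?_, rfl⟩
        rw [hBs, Finset.mem_filter]
        refine ⟨?_, by show i ≤ p0.1.1; omega⟩
        rw [colCells, Finset.mem_filter]
        exact ⟨Finset.mem_univ _, rfl⟩
      calc p0.1.1 + 1 = (Finset.range (p0.1.1 + 1)).card := (Finset.card_range _).symm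
        _ ≤ (Bs.image (fun r => r.1.1)).card := Finset.card_le_card hsub
        _ ≤ Bs.card := Finset.card_image_le
    have hcard : (colCells lam j).card < X.card := by
      rw [hX, Finset.card_union_of_disjoint hdisj]
      omega
    have hAB : ∀ a b : Cell lam, a ∈ X → b ∈ X → a.1.2 = j → b.1.2 = j + 1 → t b < t a := by
      intro a b haX hbX hameo hbmeo
      have haA : p0.1.1 ≤ a.1.1 := by
        rcases Finset.mem_union.mp haX with h | h
        · exact (Finset.mem_filter.mp h).2
        · exfalso
          have := hcolB a h
          omega
      have hbB : b.1.1 ≤ p0.1.1 := by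
        rcases Finset.mem_union.mp hbX with h | h
        · exfalso
          have := hcolA b h
          omega
        · exact (Finset.mem_filter.mp h).2
      have h1 : t b ≤ t q0 := by
        rcases eq_or_lt_of_le (le_trans hbB (le_of_eq hq0row.symm)) with h | h
        · rw [cell_ext h (by rw [hbmeo, hq0col])]
        · exact le_of_lt (hcs b q0 (by rw [hbmeo, hq0col]) h)
      have h2 : t p0 ≤ t a := hwk p0 a (by rw [hameo]) haA
      exact lt_of_le_of_lt h1 (lt_of_lt_of_le hv0 h2)
    obtain ⟨R, hRprop, hexp⟩ := garnir_expand t hXj hcard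
    rw [hexp]
    apply Submodule.sum_mem
    intro σ hσ
    apply Submodule.smul_mem
    apply ih (measureT (permTab lam t σ)) _ (permTab lam t σ) rfl
    rw [← hn]
    exact measureT_lt_of_mu_lt
      (muM_lt_of_garnir hXcol hAB (hRprop σ hσ).1 (hRprop σ hσ).2)
  · -- semistandard
    push_neg at hrow
    have hrw : RowsWeak lam (· ≤ ·) t :=
      row_complete (fun p q hr hc => hrow p q hr hc)
    apply Submodule.subset_span
    exact ⟨⟨t, hrw, fun p q hc hr => hcs p q hc hr⟩, rfl⟩

theorem ssyt_span (hlam : IsPartition lam) :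
    Submodule.span K (Set.range (fun s : SSYT lam B => polytabloid K lam s.1)) =
      nabla K lam B := by
  apply le_antisymm
  · apply Submodule.span_le.mpr
    rintro v ⟨s, rfl⟩
    exact Submodule.subset_span ⟨s.1, rfl⟩
  · apply Submodule.span_le.mpr
    rintro v ⟨t, rfl⟩
    show polytabloid K lam t ∈
      (Submodule.span K (Set.range (fun s : SSYT lam B => polytabloid K lam s.1)) :
        Set (SymMod lam B K))
    rw [SetLike.mem_coe]
    have hz := spanZ (B := B) hlam t
    rw [Finsupp.mem_span_range_iff_exists_finsupp] at hz
    obtain ⟨c, hc⟩ := hz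
    have hmap := congrArg (Finsupp.mapRange.addMonoidHom (Int.castAddHom K)) hc
    rw [mapRange_polytabloid] at hmap
    rw [← hmap, Finsupp.sum, map_sum]
    apply Submodule.sum_mem
    intro s _
    rw [map_zsmul, mapRange_polytabloid]
    refine zsmul_mem ?_ _
    apply Submodule.subset_span
    exact ⟨s, rfl⟩

end Span

/-- **Proposition (semistandard basis theorem).**
Let `K` be a commutative ring, `B` a totally ordered set, `V` the free `K`-module with
basis indexed by `B`, and `lam` a partition.  Then the GL-polytabloids `F(s)`, for `s`
ranging over the semistandard `lam`-tableaux with entries from `B`, form a `K`-basis of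
`∇^lam (V)`: they are linearly independent and they span `∇^lam (V)`. -/
theorem semistandard_basis (K : Type*) [CommRing K] (B : Type*) [LinearOrder B]
    (lam : ℕ →₀ ℕ) (hlam : IsPartition lam) :
    LinearIndependent K (fun s : SSYT lam B => polytabloid K lam s.1) ∧
    Submodule.span K (Set.range (fun s : SSYT lam B => polytabloid K lam s.1)) =
      nabla K lam B := by
  exact ⟨ssyt_linearIndependent, ssyt_span hlam⟩

end Pleth
end
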